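/- arXiv:2404.09268 — 7 statements merged into one kernel-verified Lean document; each statement's English description precedes it below -/
import Mathlib

section
/- Let G be a finite simple graph with at least two vertices, let H be an induced bipartite subgraph of G, and let V(H) = V₁ ∪ V₂ be a bipartition of the vertices of H into two (nonempty) independent sets. Then the smallest adjacency eigenvalue of G satisfies λ(G) ≤ -|E(H)| / √(|V₁|·|V₂|). -/
/-!
Common definitions: smallest adjacency eigenvalue, independent vertex sets,
edge counts of induced subgraphs, chromatic number, independence number,
and the invariants `η`, `ι`, `θ` from the paper.
-/

open Finset SimpleGraph Matrix

set_option linter.unusedSectionVars false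

variable {V : Type} [Fintype V] [DecidableEq V]

/-- A finite set of vertices is an independent set in `G`. -/
def IsIndepFinset (G : SimpleGraph V) (s : Finset V) : Prop :=
  ∀ u ∈ s, ∀ v ∈ s, ¬ G.Adj u v

/-- The adjacency matrix of a finite graph is Hermitian (over `ℝ`). -/
theorem adj_isHermitian (G : SimpleGraph V) [DecidableRel G.Adj] :
    (G.adjMatrix ℝ).IsHermitian := by
  rw [Matrix.IsHermitian, conjTranspose_eq_transpose_of_trivial]
  exact isSymm_adjMatrix G

/-- `λ(G)`: the smallest eigenvalue of the adjacency matrix of `G`. -/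
noncomputable def lambdaMin (G : SimpleGraph V) : ℝ :=
  letI := Classical.decRel G.Adj
  ⨅ i, (adj_isHermitian G).eigenvalues i

/-- `|E(G)|`: the number of edges of `G`. -/
noncomputable def edgeCount (G : SimpleGraph V) : ℕ := Nat.card G.edgeSet

/-- The number of edges of the subgraph of `G` induced on the vertex set `s`. -/
noncomputable def inducedEdgeCount (G : SimpleGraph V) (s : Finset V) : ℕ :=
  Nat.card (G.induce (s : Set V)).edgeSet

/-- `χ(G)`: the chromatic number of `G`, as a natural number. -/
noncomputable def chromNum (G : SimpleGraph V) : ℕ := G.chromaticNumber.toNat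

/-- `α(G)`: the independence number of `G`. -/
noncomputable def indepNum (G : SimpleGraph V) : ℕ :=
  sSup {k | ∃ s : Finset V, IsIndepFinset G s ∧ s.card = k}

/-- `θ(G) = min {n/2, α(G)}`. -/
noncomputable def theta (G : SimpleGraph V) : ℝ :=
  min ((Fintype.card V : ℝ) / 2) (_root_.indepNum G : ℝ)

/-- `η(G)`: the supremum of `|E(H)| / √(|V₁|·|V₂|)` over all induced bipartite
subgraphs `H` of `G` with bipartition into nonempty independent sets `V₁`, `V₂`. -/
noncomputable def eta (G : SimpleGraph V) : ℝ :=
  sSup {x : ℝ | ∃ V₁ V₂ : Finset V, V₁.Nonempty ∧ V₂.Nonempty ∧ Disjoint V₁ V₂ ∧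
    IsIndepFinset G V₁ ∧ IsIndepFinset G V₂ ∧
    x = (inducedEdgeCount G (V₁ ∪ V₂) : ℝ) / Real.sqrt ((V₁.card : ℝ) * (V₂.card : ℝ))}

/-- `ι(G)`: the supremum of the average degree `2|E(H)|/|V(H)|` over all nonempty
induced bipartite subgraphs `H` of `G`. -/
noncomputable def iota (G : SimpleGraph V) : ℝ :=
  sSup {x : ℝ | ∃ V₁ V₂ : Finset V, (V₁ ∪ V₂).Nonempty ∧ Disjoint V₁ V₂ ∧
    IsIndepFinset G V₁ ∧ IsIndepFinset G V₂ ∧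
    x = 2 * (inducedEdgeCount G (V₁ ∪ V₂) : ℝ) / ((V₁ ∪ V₂).card : ℝ)}


/-- Rayleigh-quotient lower bound: the infimum of eigenvalues bounds the quadratic form. -/
lemma rayleigh_min {n : Type} [Fintype n] [DecidableEq n] [Nonempty n]
    (A : Matrix n n ℝ) (hA : A.IsHermitian) (x : n → ℝ) :
    (⨅ i, hA.eigenvalues i) * (x ⬝ᵥ x) ≤ x ⬝ᵥ (A *ᵥ x) := by
  classical
  set B := hA.eigenvectorBasis with hB
  set c : n → ℝ := fun i => (B.repr (WithLp.toLp 2 x)) i with hc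
  have hxB : ∀ i, (∑ j, B i j * x j) = c i := by
    intro i
    have h := B.repr_apply_apply (WithLp.toLp 2 x) i
    rw [hc]
    simp only [h, PiLp.inner_apply, RCLike.inner_apply, starRingEnd_apply, star_trivial]
    simp [mul_comm]
  have hxsum : x = ∑ i, c i • (B i : n → ℝ) := by
    have h := congrArg WithLp.ofLp (B.sum_repr (WithLp.toLp 2 x))
    rw [WithLp.ofLp_sum] at h
    simpa [hc] using h.symm
  have hcomp : ∀ j, x j = ∑ i, c i * B i j := by
    intro j
    conv_lhs => rw [hxsum]
    rw [Finset.sum_apply]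
    simp [smul_eq_mul]
  have hdot : x ⬝ᵥ x = ∑ i, c i ^ 2 := by
    unfold dotProduct
    calc (∑ j, x j * x j) = ∑ j, (∑ i, c i * B i j) * x j :=
          Finset.sum_congr rfl (fun j _ => by rw [← hcomp])
      _ = ∑ j, ∑ i, c i * (B i j * x j) := by
          simp_rw [Finset.sum_mul, mul_assoc]
      _ = ∑ i, c i * (∑ j, B i j * x j) := by
          rw [Finset.sum_comm]; simp_rw [← Finset.mul_sum]
      _ = ∑ i, c i ^ 2 := by simp_rw [hxB, pow_two]
  have hmv : ∀ j, (A *ᵥ x) j = ∑ i, hA.eigenvalues i * c i * B i j := by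
    intro j
    calc (A *ᵥ x) j = ∑ k, A j k * x k := rfl
      _ = ∑ k, A j k * ∑ i, c i * B i k := by simp_rw [← hcomp]
      _ = ∑ k, ∑ i, c i * (A j k * B i k) := by
          simp_rw [Finset.mul_sum]; congr 1; funext k; congr 1; funext i; ring
      _ = ∑ i, c i * ∑ k, A j k * B i k := by
          rw [Finset.sum_comm]; simp_rw [← Finset.mul_sum]
      _ = ∑ i, c i * (hA.eigenvalues i * B i j) := by
          congr 1; funext i; congr 1
          have := congrFun (hA.mulVec_eigenvectorBasis i) j
          simpa [Matrix.mulVec, dotProduct] using this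
      _ = ∑ i, hA.eigenvalues i * c i * B i j := by congr 1; funext i; ring
  have hAx : x ⬝ᵥ (A *ᵥ x) = ∑ i, hA.eigenvalues i * c i ^ 2 := by
    unfold dotProduct
    calc (∑ j, x j * (A *ᵥ x) j) = ∑ j, ∑ i, hA.eigenvalues i * c i * (B i j * x j) := by
          simp_rw [hmv, Finset.mul_sum]
          congr 1; funext j; congr 1; funext i; ring
      _ = ∑ i, hA.eigenvalues i * c i * ∑ j, B i j * x j := by
          rw [Finset.sum_comm]; simp_rw [← Finset.mul_sum]
      _ = ∑ i, hA.eigenvalues i * c i ^ 2 := by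
          congr 1; funext i; rw [hxB]; ring
  rw [hdot, hAx, Finset.mul_sum]
  apply Finset.sum_le_sum
  intro i _
  exact mul_le_mul_of_nonneg_right (ciInf_le (Finite.bddBelow_range _) i) (sq_nonneg _)

/-- The induced subgraph on the union of two disjoint independent sets has exactly the
cross edges. -/
lemma inducedEdgeCount_eq_cross (G : SimpleGraph V) [DecidableRel G.Adj]
    (V₁ V₂ : Finset V) (hdisj : Disjoint V₁ V₂)
    (hi₁ : IsIndepFinset G V₁) (hi₂ : IsIndepFinset G V₂) :
    inducedEdgeCount G (V₁ ∪ V₂) =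
      ((V₁ ×ˢ V₂).filter fun p : V × V => G.Adj p.1 p.2).card := by
  classical
  set F := (V₁ ×ˢ V₂).filter fun p : V × V => G.Adj p.1 p.2 with hF
  rw [inducedEdgeCount]
  have hmem : ∀ {p : V × V}, p ∈ F → p.1 ∈ V₁ ∧ p.2 ∈ V₂ ∧ G.Adj p.1 p.2 := by
    intro p hp
    simp only [hF, Finset.mem_filter, Finset.mem_product] at hp
    exact ⟨hp.1.1, hp.1.2, hp.2⟩
  have h1 : ∀ {v}, v ∈ V₁ → v ∈ (↑(V₁ ∪ V₂) : Set V) := fun h => by simp [h]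
  have h2 : ∀ {v}, v ∈ V₂ → v ∈ (↑(V₁ ∪ V₂) : Set V) := fun h => by simp [h]
  have key : Nat.card {p : V × V // p ∈ F} =
      Nat.card (G.induce (↑(V₁ ∪ V₂) : Set V)).edgeSet := by
    apply Nat.card_eq_of_bijective (fun p : {p : V × V // p ∈ F} =>
      (⟨s(⟨p.1.1, h1 (hmem p.2).1⟩, ⟨p.1.2, h2 (hmem p.2).2.1⟩),
        by
          simp only [SimpleGraph.mem_edgeSet, SimpleGraph.comap_adj,
            Function.Embedding.coe_subtype]
          exact (hmem p.2).2.2⟩ :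
        (G.induce (↑(V₁ ∪ V₂) : Set V)).edgeSet))
    constructor
    · rintro ⟨⟨a, b⟩, hab⟩ ⟨⟨c, d⟩, hcd⟩ h
      have hab' := hmem hab
      have hcd' := hmem hcd
      simp only [Subtype.mk.injEq, Sym2.eq_iff, Subtype.mk.injEq] at h
      rcases h with ⟨h₁, h₂⟩ | ⟨h₁, h₂⟩
      · exact Subtype.ext (Prod.ext h₁ h₂)
      · exact absurd (h₁ ▸ hcd'.2.1) (Finset.disjoint_left.mp hdisj hab'.1)
    · rintro ⟨e, he⟩
      induction e using Sym2.ind with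
      | _ x y =>
        obtain ⟨u, hu⟩ := x
        obtain ⟨v, hv⟩ := y
        rw [SimpleGraph.mem_edgeSet] at he
        simp only [SimpleGraph.comap_adj, Function.Embedding.coe_subtype] at he
        simp only [Finset.coe_union, Set.mem_union, Finset.mem_coe] at hu hv
        rcases hu with hu | hu
        · have hv2 : v ∈ V₂ := by
            rcases hv with hv | hv
            · exact absurd he (hi₁ u hu v hv)
            · exact hv
          refine ⟨⟨(u, v), ?_⟩, rfl⟩
          simp only [hF, Finset.mem_filter, Finset.mem_product]
          exact ⟨⟨hu, hv2⟩, he⟩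
        · have hv1 : v ∈ V₁ := by
            rcases hv with hv | hv
            · exact hv
            · exact absurd he (hi₂ u hu v hv)
          refine ⟨⟨(v, u), ?_⟩, Subtype.ext (Sym2.eq_swap)⟩
          simp only [hF, Finset.mem_filter, Finset.mem_product]
          exact ⟨⟨hv1, hu⟩, he.symm⟩
  rw [← key, Nat.card_eq_finsetCard]

/-- Theorem 2.1. Let `G` be a graph with at least two vertices, and let
`H` be the induced bipartite subgraph of `G` on a bipartition `V₁ ∪ V₂` into nonempty
independent sets. Then `λ(G) ≤ -|E(H)| / √(|V₁|·|V₂|)`. -/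
theorem smallest_eigenvalue_le_of_induced_bipartite (G : SimpleGraph V)
    (hV : 2 ≤ Fintype.card V)
    (V₁ V₂ : Finset V) (h₁ : V₁.Nonempty) (h₂ : V₂.Nonempty) (hdisj : Disjoint V₁ V₂)
    (hi₁ : IsIndepFinset G V₁) (hi₂ : IsIndepFinset G V₂) :
    lambdaMin G ≤
      -(inducedEdgeCount G (V₁ ∪ V₂) : ℝ) / Real.sqrt ((V₁.card : ℝ) * (V₂.card : ℝ)) := by
  letI : DecidableRel G.Adj := Classical.decRel G.Adj
  have hne : Nonempty V := Fintype.card_pos_iff.mp (by omega)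
  set A := G.adjMatrix ℝ with hAdef
  set a : ℝ := (V₁.card : ℝ) with ha'
  set b : ℝ := (V₂.card : ℝ) with hb'
  have ha : 0 < a := by rw [ha']; exact_mod_cast Finset.card_pos.mpr h₁
  have hb : 0 < b := by rw [hb']; exact_mod_cast Finset.card_pos.mpr h₂
  set sa : ℝ := Real.sqrt a with hsa'
  set sb : ℝ := Real.sqrt b with hsb'
  have hsa : 0 < sa := Real.sqrt_pos.mpr ha
  have hsb : 0 < sb := Real.sqrt_pos.mpr hb
  have hsasa : sa * sa = a := Real.mul_self_sqrt ha.le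
  have hsbsb : sb * sb = b := Real.mul_self_sqrt hb.le
  set E : ℝ := (inducedEdgeCount G (V₁ ∪ V₂) : ℝ) with hE'
  set x : V → ℝ := fun v => (if v ∈ V₁ then sb else 0) + (if v ∈ V₂ then -sa else 0) with hx
  have hx1 : ∀ v ∈ V₁, x v = sb := by
    intro v hv
    have hv2 : v ∉ V₂ := Finset.disjoint_left.mp hdisj hv
    simp [hx, hv, hv2]
  have hx2 : ∀ v ∈ V₂, x v = -sa := by
    intro v hv
    have hv1 : v ∉ V₁ := Finset.disjoint_right.mp hdisj hv
    simp [hx, hv, hv1]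
  have hx0 : ∀ v, v ∉ V₁ → v ∉ V₂ → x v = 0 := by
    intro v hv1 hv2
    simp [hx, hv1, hv2]
  have hcross : (∑ u ∈ V₁, ∑ v ∈ V₂, A u v) = E := by
    rw [← Finset.sum_product' (f := fun u v => A u v)]
    simp only [hAdef, SimpleGraph.adjMatrix_apply]
    rw [Finset.sum_boole, hE', inducedEdgeCount_eq_cross G V₁ V₂ hdisj hi₁ hi₂]
  have hsymm : ∀ p q : V, A p q = A q p := by
    intro p q
    simp only [hAdef, SimpleGraph.adjMatrix_apply]
    exact if_congr (G.adj_comm p q) rfl rfl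
  have hcross' : (∑ u ∈ V₂, ∑ v ∈ V₁, A u v) = E := by
    calc (∑ u ∈ V₂, ∑ v ∈ V₁, A u v)
        = ∑ v ∈ V₁, ∑ u ∈ V₂, A u v := Finset.sum_comm
      _ = ∑ v ∈ V₁, ∑ u ∈ V₂, A v u :=
          Finset.sum_congr rfl fun v _ => Finset.sum_congr rfl fun u _ => hsymm u v
      _ = E := hcross
  have hxx : x ⬝ᵥ x = 2 * (a * b) := by
    unfold dotProduct
    have hpt : ∀ v, x v * x v = (if v ∈ V₁ then b else 0) + (if v ∈ V₂ then a else 0) := by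
      intro v
      by_cases h1v : v ∈ V₁
      · have h2v : v ∉ V₂ := Finset.disjoint_left.mp hdisj h1v
        rw [hx1 v h1v, if_pos h1v, if_neg h2v, add_zero, hsbsb]
      · by_cases h2v : v ∈ V₂
        · rw [hx2 v h2v, if_neg h1v, if_pos h2v, zero_add, neg_mul_neg, hsasa]
        · rw [hx0 v h1v h2v, if_neg h1v, if_neg h2v, add_zero, mul_zero]
    simp_rw [hpt]
    rw [Finset.sum_add_distrib, Finset.sum_ite_mem, Finset.sum_ite_mem,
      Finset.univ_inter, Finset.univ_inter, Finset.sum_const, Finset.sum_const,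
      nsmul_eq_mul, nsmul_eq_mul, ← ha', ← hb']
    ring
  have inner1 : ∀ u ∈ V₁, (∑ v, A u v * x v) = -sa * ∑ v ∈ V₂, A u v := by
    intro u hu
    have hres : ∑ v, A u v * x v = ∑ v ∈ V₁ ∪ V₂, A u v * x v :=
      (Finset.sum_subset (Finset.subset_univ _) (fun v _ hv => by
        rw [hx0 v (fun h => hv (Finset.mem_union_left _ h))
          (fun h => hv (Finset.mem_union_right _ h)), mul_zero])).symm
    rw [hres, Finset.sum_union hdisj]
    have z1 : ∑ v ∈ V₁, A u v * x v = 0 :=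
      Finset.sum_eq_zero fun v hv => by
        have hna : ¬ G.Adj u v := hi₁ u hu v hv
        simp [hAdef, SimpleGraph.adjMatrix_apply, hna]
    rw [z1, zero_add, Finset.mul_sum]
    refine Finset.sum_congr rfl fun v hv => ?_
    rw [hx2 v hv]; ring
  have inner2 : ∀ u ∈ V₂, (∑ v, A u v * x v) = sb * ∑ v ∈ V₁, A u v := by
    intro u hu
    have hres : ∑ v, A u v * x v = ∑ v ∈ V₁ ∪ V₂, A u v * x v :=
      (Finset.sum_subset (Finset.subset_univ _) (fun v _ hv => by
        rw [hx0 v (fun h => hv (Finset.mem_union_left _ h))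
          (fun h => hv (Finset.mem_union_right _ h)), mul_zero])).symm
    rw [hres, Finset.sum_union hdisj]
    have z2 : ∑ v ∈ V₂, A u v * x v = 0 :=
      Finset.sum_eq_zero fun v hv => by
        have hna : ¬ G.Adj u v := hi₂ u hu v hv
        simp [hAdef, SimpleGraph.adjMatrix_apply, hna]
    rw [z2, add_zero, Finset.mul_sum]
    refine Finset.sum_congr rfl fun v hv => ?_
    rw [hx1 v hv]; ring
  have hmv : x ⬝ᵥ (A *ᵥ x) = -(2 * (sa * sb) * E) := by
    have hform : x ⬝ᵥ (A *ᵥ x) = ∑ u, x u * (∑ v, A u v * x v) := rfl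
    rw [hform]
    have hres : ∑ u, x u * (∑ v, A u v * x v)
        = ∑ u ∈ V₁ ∪ V₂, x u * (∑ v, A u v * x v) :=
      (Finset.sum_subset (Finset.subset_univ _) (fun u _ hu => by
        rw [hx0 u (fun h => hu (Finset.mem_union_left _ h))
          (fun h => hu (Finset.mem_union_right _ h)), zero_mul])).symm
    rw [hres, Finset.sum_union hdisj]
    have t1 : ∑ u ∈ V₁, x u * (∑ v, A u v * x v) = -(sb * sa) * E := by
      calc ∑ u ∈ V₁, x u * (∑ v, A u v * x v)
          = ∑ u ∈ V₁, (-(sb * sa)) * ∑ v ∈ V₂, A u v :=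
            Finset.sum_congr rfl fun u hu => by rw [hx1 u hu, inner1 u hu]; ring
        _ = -(sb * sa) * ∑ u ∈ V₁, ∑ v ∈ V₂, A u v := by rw [← Finset.mul_sum]
        _ = -(sb * sa) * E := by rw [hcross]
    have t2 : ∑ u ∈ V₂, x u * (∑ v, A u v * x v) = -(sa * sb) * E := by
      calc ∑ u ∈ V₂, x u * (∑ v, A u v * x v)
          = ∑ u ∈ V₂, (-(sa * sb)) * ∑ v ∈ V₁, A u v :=
            Finset.sum_congr rfl fun u hu => by rw [hx2 u hu, inner2 u hu]; ring
        _ = -(sa * sb) * ∑ u ∈ V₂, ∑ v ∈ V₁, A u v := by rw [← Finset.mul_sum]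
        _ = -(sa * sb) * E := by rw [hcross']
    rw [t1, t2]; ring
  have hR := rayleigh_min A (adj_isHermitian G) x
  rw [hxx, hmv] at hR
  have hP : (0:ℝ) < sa * sb := mul_pos hsa hsb
  have hfin : (⨅ i, (adj_isHermitian G).eigenvalues i) ≤ -E / (sa * sb) := by
    rw [le_div_iff₀ hP]
    have h2P : (0:ℝ) < 2 * (sa * sb) := by positivity
    refine le_of_mul_le_mul_right ?_ h2P
    calc (⨅ i, (adj_isHermitian G).eigenvalues i) * (sa * sb) * (2 * (sa * sb))
        = (⨅ i, (adj_isHermitian G).eigenvalues i) * (2 * (a * b)) := by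
          rw [← hsasa, ← hsbsb]; ring
      _ ≤ -(2 * (sa * sb) * E) := hR
      _ = -E * (2 * (sa * sb)) := by ring
  calc lambdaMin G = ⨅ i, (adj_isHermitian G).eigenvalues i := rfl
    _ ≤ -E / (sa * sb) := hfin
    _ = -E / Real.sqrt (a * b) := by rw [Real.sqrt_mul ha.le, ← hsa', ← hsb']
end

section
/- Let G be a finite simple graph with at least two vertices. Then λ(G) ≤ -ι(G), where ι(G) is the maximum of the average degree d̄(H) = 2|E(H)|/|V(H)| over all nonempty induced bipartite subgraphs H of G. -/
/-!
Common definitions: smallest adjacency eigenvalue, independent vertex sets,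
edge counts of induced subgraphs, chromatic number, independence number,
and the invariants `η`, `ι`, `θ` from the paper.
-/

open Finset SimpleGraph Matrix

set_option linter.unusedSectionVars false

variable {V : Type} [Fintype V] [DecidableEq V]

/-- Auxiliary: `(M *ᵥ v) ⬝ᵥ w = v ⬝ᵥ (Mᵀ *ᵥ w)` over `ℝ`. -/
private lemma aux_mulVec_dot {n : Type} [Fintype n] (M : Matrix n n ℝ) (v w : n → ℝ) :
    (M *ᵥ v) ⬝ᵥ w = v ⬝ᵥ (Mᵀ *ᵥ w) := by
  simp only [dotProduct, mulVec, transpose_apply, Finset.sum_mul, Finset.mul_sum]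
  rw [Finset.sum_comm]
  exact Finset.sum_congr rfl fun i _ => Finset.sum_congr rfl fun j _ => by ring

/-- Rayleigh bound: the smallest eigenvalue bounds the quadratic form from below. -/
private lemma aux_rayleigh_min {n : Type} [Fintype n] [DecidableEq n] [Nonempty n]
    {A : Matrix n n ℝ} (hA : A.IsHermitian) (x : n → ℝ) :
    (⨅ i, hA.eigenvalues i) * (x ⬝ᵥ x) ≤ x ⬝ᵥ (A *ᵥ x) := by
  classical
  set U : Matrix n n ℝ := (hA.eigenvectorUnitary : Matrix n n ℝ) with hUdef
  have hstar : star U = Uᵀ := by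
    rw [Matrix.star_eq_conjTranspose, conjTranspose_eq_transpose_of_trivial]
  have hUU : U * Uᵀ = 1 := by
    rw [← hstar]; exact (Matrix.mem_unitaryGroup_iff).mp hA.eigenvectorUnitary.2
  set y := Uᵀ *ᵥ x with hy
  have h1 : x ⬝ᵥ x = y ⬝ᵥ y := by
    have h : y ⬝ᵥ y = (Uᵀ *ᵥ x) ⬝ᵥ y := rfl
    rw [h, aux_mulVec_dot, transpose_transpose, hy, mulVec_mulVec, hUU, one_mulVec]
  have h2 : x ⬝ᵥ (A *ᵥ x) = ∑ i, hA.eigenvalues i * (y i * y i) := by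
    have hspec := hA.spectral_theorem
    rw [Unitary.conjStarAlgAut_apply, ← hUdef] at hspec
    rw [hstar] at hspec
    conv_lhs => rw [hspec]
    rw [← mulVec_mulVec, ← mulVec_mulVec, dotProduct_comm, aux_mulVec_dot, ← hy,
      dotProduct_comm, aux_mulVec_dot]
    rw [transpose_transpose, dotProduct_comm, aux_mulVec_dot, ← hy]
    simp only [dotProduct, mulVec_diagonal, RCLike.ofReal_real_eq_id, Function.comp_apply,
      id_eq]
    exact Finset.sum_congr rfl fun i _ => by ring
  rw [h1, h2, dotProduct, Finset.mul_sum]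
  refine Finset.sum_le_sum fun i _ => ?_
  exact mul_le_mul_of_nonneg_right (ciInf_le (Finite.bddBelow_range _) i) (mul_self_nonneg _)

/-- Handshake identity for induced subgraphs. -/
private lemma aux_twice_inducedEdgeCount (G : SimpleGraph V) [DecidableRel G.Adj]
    (s : Finset V) :
    2 * inducedEdgeCount G s = ∑ u ∈ s, ∑ v ∈ s, (if G.Adj u v then 1 else 0) := by
  classical
  letI : DecidableRel (G.induce (s : Set V)).Adj :=
    fun a b => decidable_of_iff (G.Adj a b) (comap_adj).symm
  have hE : inducedEdgeCount G s = (G.induce (s : Set V)).edgeFinset.card := by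
    rw [inducedEdgeCount, Nat.card_eq_fintype_card, ← Set.toFinset_card]
    simp only [edgeFinset]
  rw [hE, ← sum_degrees_eq_twice_card_edges]
  have hdeg : ∀ a : (s : Set V), (G.induce (s : Set V)).degree a
      = ∑ v ∈ s, (if G.Adj a v then 1 else 0) := by
    intro a
    rw [degree, neighborFinset_eq_filter, Finset.card_filter]
    rw [← Finset.sum_finset_coe (f := fun v => if G.Adj (a : V) v then 1 else 0)]
    exact Finset.sum_congr rfl fun i _ => by rw [if_congr comap_adj rfl rfl]; rfl
  rw [Finset.sum_congr rfl fun a _ => hdeg a,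
    ← Finset.sum_finset_coe (f := fun u => ∑ v ∈ s, if G.Adj u v then 1 else 0)]

/-- Corollary 2.6. Let `G` be a graph with at least two vertices.
Then `λ(G) ≤ -ι(G)`. -/
theorem smallest_eigenvalue_le_neg_iota (G : SimpleGraph V) (hV : 2 ≤ Fintype.card V) :
    lambdaMin G ≤ -iota G := by
  classical
  letI : DecidableRel G.Adj := Classical.decRel _
  haveI : Nonempty V := Fintype.card_pos_iff.mp (by omega)
  have hlam : lambdaMin G = ⨅ i, (adj_isHermitian G).eigenvalues i := rfl
  suffices h : iota G ≤ - lambdaMin G by linarith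
  obtain ⟨v⟩ := ‹Nonempty V›
  have hmem : (2 * (inducedEdgeCount G (({v} : Finset V) ∪ ∅) : ℝ) /
      (((({v} : Finset V) ∪ ∅)).card : ℝ)) ∈
      {x : ℝ | ∃ V₁ V₂ : Finset V, (V₁ ∪ V₂).Nonempty ∧ Disjoint V₁ V₂ ∧
        IsIndepFinset G V₁ ∧ IsIndepFinset G V₂ ∧
        x = 2 * (inducedEdgeCount G (V₁ ∪ V₂) : ℝ) / ((V₁ ∪ V₂).card : ℝ)} := by
    refine ⟨{v}, ∅, by simp, by simp, ?_, ?_, rfl⟩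
    · intro a ha b hb
      simp only [Finset.mem_singleton] at ha hb
      subst ha; subst hb; exact fun h => G.irrefl h
    · intro a ha; simp at ha
  refine csSup_le ⟨_, hmem⟩ ?_
  rintro r ⟨V₁, V₂, hne, hdisj, hind₁, hind₂, rfl⟩
  set s : Finset V := V₁ ∪ V₂ with hs
  set x : V → ℝ := fun u => if u ∈ V₁ then 1 else if u ∈ V₂ then -1 else 0 with hx
  have hxzero : ∀ u, u ∉ s → x u = 0 := by
    intro u hu
    rw [hs, Finset.mem_union] at hu
    push_neg at hu
    simp [hx, hu.1, hu.2]
  have hxsq : ∀ u, u ∈ s → x u * x u = 1 := by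
    intro u hu
    rw [hs, Finset.mem_union] at hu
    rcases hu with h | h
    · simp [hx, h]
    · have h1 : u ∉ V₁ := fun hu1 => (Finset.disjoint_left.mp hdisj hu1) h
      simp [hx, h, h1]
  have hxy : ∀ u ∈ s, ∀ v ∈ s, G.Adj u v → x u * x v = -1 := by
    intro u hu v hv hadj
    rw [hs, Finset.mem_union] at hu hv
    rcases hu with hu | hu
    · have hv2 : v ∈ V₂ := by
        rcases hv with hv | hv
        · exact absurd hadj (hind₁ u hu v hv)
        · exact hv
      have hv1 : v ∉ V₁ := fun h => (Finset.disjoint_left.mp hdisj h) hv2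
      simp [hx, hu, hv1, hv2]
    · have hu1 : u ∉ V₁ := fun h => (Finset.disjoint_left.mp hdisj h) hu
      have hv1 : v ∈ V₁ := by
        rcases hv with hv | hv
        · exact hv
        · exact absurd hadj (hind₂ u hu v hv)
      simp [hx, hu, hu1, hv1]
  have hnorm : x ⬝ᵥ x = (s.card : ℝ) := by
    rw [dotProduct]
    rw [← Finset.sum_subset (Finset.subset_univ s)
      (fun u _ hu => by rw [hxzero u hu]; ring)]
    rw [Finset.sum_congr rfl (fun u hu => hxsq u hu)]
    simp
  have hquad : x ⬝ᵥ (G.adjMatrix ℝ *ᵥ x)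
      = -(∑ u ∈ s, ∑ v ∈ s, (if G.Adj u v then (1 : ℝ) else 0)) := by
    have hexp : x ⬝ᵥ (G.adjMatrix ℝ *ᵥ x)
        = ∑ u, ∑ v, x u * ((if G.Adj u v then (1 : ℝ) else 0) * x v) := by
      simp [dotProduct, mulVec, Finset.mul_sum]
    rw [hexp]
    rw [← Finset.sum_subset (Finset.subset_univ s)
      (fun u _ hu => by
        refine Finset.sum_eq_zero fun v _ => ?_
        rw [hxzero u hu]; ring)]
    have hinner : ∀ u ∈ s, (∑ v, x u * ((if G.Adj u v then (1 : ℝ) else 0) * x v))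
        = ∑ v ∈ s, x u * ((if G.Adj u v then (1 : ℝ) else 0) * x v) :=
      fun u _ => (Finset.sum_subset (Finset.subset_univ s)
        (fun v _ hv => by rw [hxzero v hv]; ring)).symm
    rw [Finset.sum_congr rfl hinner, ← Finset.sum_neg_distrib]
    refine Finset.sum_congr rfl fun u hu => ?_
    rw [← Finset.sum_neg_distrib]
    refine Finset.sum_congr rfl fun v hv => ?_
    by_cases hadj : G.Adj u v
    · simp only [if_pos hadj, one_mul]
      exact hxy u hu v hv hadj
    · simp [hadj]
  -- cast the handshake identity
  have hcast : (2 * (inducedEdgeCount G s : ℝ))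
      = ∑ u ∈ s, ∑ v ∈ s, (if G.Adj u v then (1 : ℝ) else 0) := by
    have h := congrArg (fun k : ℕ => (k : ℝ)) (aux_twice_inducedEdgeCount G s)
    push_cast at h
    simpa using h
  have hray := aux_rayleigh_min (adj_isHermitian G) x
  rw [hnorm, hquad, ← hcast, ← hlam] at hray
  have hpos : (0 : ℝ) < (s.card : ℝ) := by
    exact_mod_cast Finset.card_pos.mpr hne
  rw [div_le_iff₀ hpos]
  nlinarith [hray]
end

section
/- Let G₁ and G₂ be finite simple graphs, each with at least two vertices, such that λ(G₁) = -ι(G₁) and λ(G₂) = -ι(G₂). Then λ(G₁ □ G₂) = -ι(G₁ □ G₂), where G₁ □ G₂ denotes the Cartesian product of G₁ and G₂. -/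
/-!
Common definitions: smallest adjacency eigenvalue, independent vertex sets,
edge counts of induced subgraphs, chromatic number, independence number,
and the invariants `η`, `ι`, `θ` from the paper.
-/

open Finset SimpleGraph Matrix

set_option linter.unusedSectionVars false

variable {V : Type} [Fintype V] [DecidableEq V]

/-! ### Auxiliary lemmas -/

section MatrixAux
variable {n : Type} [Fintype n] [DecidableEq n]

theorem herm_rayleigh {A : Matrix n n ℝ} (hA : A.IsHermitian) [Nonempty n] (x : n → ℝ) :
    (⨅ i, hA.eigenvalues i) * (x ⬝ᵥ x) ≤ x ⬝ᵥ (A *ᵥ x) := by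
  set U : Matrix n n ℝ := (hA.eigenvectorUnitary : Matrix n n ℝ) with hU
  set y : n → ℝ := star U *ᵥ x with hy
  have hsU : star U = Uᵀ := by
    rw [← conjTranspose_eq_transpose_of_trivial]; rfl
  have hyy : y = x ᵥ* U := by rw [hy, hsU, mulVec_transpose]
  have hUU : U * star U = 1 := Unitary.mul_star_self_of_mem hA.eigenvectorUnitary.2
  have hxy : x ⬝ᵥ x = y ⬝ᵥ y := by
    have : y ⬝ᵥ y = x ⬝ᵥ ((U * star U) *ᵥ x) := by
      rw [← mulVec_mulVec, dotProduct_mulVec x U _, ← hyy, hy]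
    rw [this, hUU, one_mulVec]
  have hQ : x ⬝ᵥ (A *ᵥ x) = ∑ i, hA.eigenvalues i * (y i * y i) := by
    conv_lhs => rw [hA.spectral_theorem, Unitary.conjStarAlgAut_apply, ← hU]
    rw [← mulVec_mulVec, ← mulVec_mulVec, dotProduct_mulVec x U _, ← hyy, ← hy]
    simp only [mulVec_diagonal, dotProduct, Function.comp_apply, RCLike.ofReal_real_eq_id, id]
    exact Finset.sum_congr rfl fun i _ => by ring
  rw [hQ, hxy, dotProduct, Finset.mul_sum]
  exact Finset.sum_le_sum fun i _ =>
    mul_le_mul_of_nonneg_right (ciInf_le (Set.Finite.bddBelow (Set.finite_range _)) i)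
      (mul_self_nonneg _)

theorem herm_eigvec {A : Matrix n n ℝ} (hA : A.IsHermitian) [Nonempty n] :
    ∃ v : n → ℝ, v ≠ 0 ∧ A *ᵥ v = (⨅ i, hA.eigenvalues i) • v := by
  obtain ⟨i, hi⟩ := Finite.exists_min hA.eigenvalues
  have : (⨅ j, hA.eigenvalues j) = hA.eigenvalues i :=
    le_antisymm (ciInf_le (Set.Finite.bddBelow (Set.finite_range _)) i) (le_ciInf hi)
  exact ⟨_, (WithLp.ofLp_eq_zero 2).ne.2 <| hA.eigenvectorBasis.orthonormal.ne_zero i,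
    by rw [this]; exact hA.mulVec_eigenvectorBasis i⟩

theorem dot_self_pos {v : n → ℝ} (hv : v ≠ 0) : 0 < v ⬝ᵥ v := by
  rcases lt_or_eq_of_le (Finset.sum_nonneg fun i _ => mul_self_nonneg (v i)) with h | h
  · exact h
  · exact absurd (dotProduct_self_eq_zero.mp h.symm) hv

end MatrixAux

open Classical in
/-- The quadratic form of the adjacency matrix. -/
noncomputable def Qf (G : SimpleGraph V) (x : V → ℝ) : ℝ :=
  ∑ i, ∑ j, if G.Adj i j then x i * x j else 0

theorem Qf_eq (G : SimpleGraph V) [DecidableRel G.Adj] (x : V → ℝ) :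
    x ⬝ᵥ ((G.adjMatrix ℝ) *ᵥ x) = Qf G x := by
  rw [SimpleGraph.dotProduct_mulVec_adjMatrix, Qf]
  congr!

theorem lambdaMin_rayleigh (G : SimpleGraph V) [Nonempty V] (x : V → ℝ) :
    lambdaMin G * (x ⬝ᵥ x) ≤ Qf G x := by
  letI := Classical.decRel G.Adj
  have h := herm_rayleigh (adj_isHermitian G) x
  rw [Qf_eq] at h
  exact h

theorem lambdaMin_eigQ (G : SimpleGraph V) [Nonempty V] :
    ∃ v : V → ℝ, v ≠ 0 ∧ Qf G v = lambdaMin G * (v ⬝ᵥ v) := by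
  letI := Classical.decRel G.Adj
  obtain ⟨v, hv0, hv⟩ := herm_eigvec (adj_isHermitian G)
  refine ⟨v, hv0, ?_⟩
  rw [← Qf_eq, hv, dotProduct_smul, smul_eq_mul]
  rfl

theorem Qf_smul (G : SimpleGraph V) (c : ℝ) (x : V → ℝ) : Qf G (c • x) = c^2 * Qf G x := by
  classical
  simp only [Qf, Finset.mul_sum]
  refine Finset.sum_congr rfl fun i _ => Finset.sum_congr rfl fun j _ => ?_
  by_cases h : G.Adj i j <;> simp [h] <;> ring

open Classical in
/-- Double count of adjacent (ordered) pairs inside `s`. -/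
noncomputable def dc (G : SimpleGraph V) (s : Finset V) : ℕ :=
  ∑ u ∈ s, ∑ v ∈ s, if G.Adj u v then 1 else 0

open Classical in
theorem dc_eq (G : SimpleGraph V) (s : Finset V) :
    dc G s = 2 * inducedEdgeCount G s := by
  classical
  set H := G.induce (s : Set V) with hH
  have h1 : ∑ a, H.degree a = 2 * H.edgeFinset.card :=
    SimpleGraph.sum_degrees_eq_twice_card_edges H
  have h2 : inducedEdgeCount G s = H.edgeFinset.card := by
    rw [inducedEdgeCount, SimpleGraph.edgeFinset_card, Nat.card_eq_fintype_card]
  have h3 : ∀ a : ↥(s : Set V), H.degree a = ∑ v ∈ s, if G.Adj ↑a v then 1 else 0 := by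
    intro a
    rw [SimpleGraph.degree, SimpleGraph.neighborFinset_eq_filter, Finset.card_filter]
    rw [← Finset.sum_coe_sort s (fun v => if G.Adj ↑a v then (1:ℕ) else 0)]
    apply Fintype.sum_congr
    intro b
    rfl
  have h4 : dc G s = ∑ a, H.degree a := by
    rw [dc, ← Finset.sum_coe_sort s (fun u => ∑ v ∈ s, if G.Adj u v then (1:ℕ) else 0)]
    exact Fintype.sum_equiv (Equiv.subtypeEquivRight fun x => Finset.mem_coe.symm) _ _
      fun a => (h3 (Equiv.subtypeEquivRight (fun x => Finset.mem_coe.symm) a)).symm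
  rw [h4, h1, h2]

/-- The defining set for `iota`. -/
def iotaSet (G : SimpleGraph V) : Set ℝ :=
  {x : ℝ | ∃ V₁ V₂ : Finset V, (V₁ ∪ V₂).Nonempty ∧ Disjoint V₁ V₂ ∧
    IsIndepFinset G V₁ ∧ IsIndepFinset G V₂ ∧
    x = 2 * (inducedEdgeCount G (V₁ ∪ V₂) : ℝ) / ((V₁ ∪ V₂).card : ℝ)}

theorem iota_eq_sSup (G : SimpleGraph V) : iota G = sSup (iotaSet G) := rfl

theorem iotaSet_nonneg (G : SimpleGraph V) {x : ℝ} (hx : x ∈ iotaSet G) : 0 ≤ x := by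
  obtain ⟨V₁, V₂, hne, -, -, -, hxval⟩ := hx
  rw [hxval]
  positivity

theorem iotaSet_le (G : SimpleGraph V) {x : ℝ} (hx : x ∈ iotaSet G) :
    x ≤ (Fintype.card V : ℝ) := by
  classical
  obtain ⟨V₁, V₂, hne, -, -, -, hxval⟩ := hx
  set s := V₁ ∪ V₂
  have hc : (0:ℝ) < (s.card : ℝ) := by exact_mod_cast Finset.card_pos.mpr hne
  have hdc : dc G s ≤ s.card * s.card := by
    calc dc G s ≤ ∑ u ∈ s, ∑ v ∈ s, 1 :=
          Finset.sum_le_sum fun u _ => Finset.sum_le_sum fun v _ => by split <;> omega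
      _ = s.card * s.card := by simp [Finset.sum_const, mul_comm]
  have h2e : 2 * (inducedEdgeCount G s : ℝ) ≤ (s.card : ℝ) * (s.card : ℝ) := by
    have := dc_eq G s
    exact_mod_cast (this ▸ hdc)
  have hcard : (s.card : ℝ) ≤ (Fintype.card V : ℝ) := by
    exact_mod_cast Finset.card_le_univ s
  rw [hxval, div_le_iff₀ hc]
  calc 2 * (inducedEdgeCount G s : ℝ) ≤ (s.card : ℝ) * (s.card : ℝ) := h2e
    _ ≤ (Fintype.card V : ℝ) * (s.card : ℝ) := by nlinarith
  
theorem iotaSet_bddAbove (G : SimpleGraph V) : BddAbove (iotaSet G) :=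
  ⟨(Fintype.card V : ℝ), fun _ hx => iotaSet_le G hx⟩

theorem dc_singleton (G : SimpleGraph V) (v : V) : dc G {v} = 0 := by
  classical
  rw [dc, Finset.sum_singleton, Finset.sum_singleton, if_neg (G.irrefl)]

theorem zero_mem_iotaSet (G : SimpleGraph V) [Nonempty V] : (0:ℝ) ∈ iotaSet G := by
  obtain ⟨v⟩ := ‹Nonempty V›
  refine ⟨{v}, ∅, by simp, Finset.disjoint_empty_right _, ?_, ?_, ?_⟩
  · intro u hu w hw
    rw [Finset.mem_singleton] at hu hw
    subst hu; subst hw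
    exact G.irrefl
  · intro u hu
    exact absurd hu (Finset.notMem_empty u)
  · have h0 : inducedEdgeCount G {v} = 0 := by
      have := dc_eq G {v}
      rw [dc_singleton] at this
      omega
    rw [Finset.union_empty, h0]
    simp

theorem lambdaMin_le_neg_iotaSet (G : SimpleGraph V) [Nonempty V] {x : ℝ}
    (hx : x ∈ iotaSet G) : lambdaMin G ≤ -x := by
  classical
  obtain ⟨V₁, V₂, hne, hdisj, hI₁, hI₂, hxval⟩ := hx
  set s := V₁ ∪ V₂ with hs
  set f : V → ℝ := fun u => if u ∈ V₁ then 1 else if u ∈ V₂ then -1 else 0 with hf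
  have f₁ : ∀ w ∈ V₁, f w = 1 := fun w hw => if_pos hw
  have f₂ : ∀ w ∈ V₂, f w = -1 := fun w hw => by
    show (if w ∈ V₁ then (1:ℝ) else if w ∈ V₂ then -1 else 0) = -1
    rw [if_neg (Finset.disjoint_right.mp hdisj hw), if_pos hw]
  have hfe : ∀ u ∉ s, f u = 0 := by
    intro u hu
    rw [hs, Finset.mem_union] at hu
    push_neg at hu
    show (if u ∈ V₁ then (1:ℝ) else if u ∈ V₂ then -1 else 0) = 0
    rw [if_neg hu.1, if_neg hu.2]
  have hterm : ∀ u ∈ s, ∀ v ∈ s,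
      (if G.Adj u v then f u * f v else 0) = -(if G.Adj u v then (1:ℝ) else 0) := by
    intro u hu v hv
    by_cases h : G.Adj u v
    · rw [if_pos h, if_pos h]
      rw [hs, Finset.mem_union] at hu hv
      rcases hu with hu | hu <;> rcases hv with hv | hv
      · exact absurd h (hI₁ u hu v hv)
      · rw [f₁ u hu, f₂ v hv]; ring
      · rw [f₂ u hu, f₁ v hv]; ring
      · exact absurd h (hI₂ u hu v hv)
    · rw [if_neg h, if_neg h, neg_zero]
  have hQf : Qf G f = -((dc G s : ℕ) : ℝ) := by
    have hcast : ((dc G s : ℕ) : ℝ) = ∑ u ∈ s, ∑ v ∈ s, (if G.Adj u v then (1:ℝ) else 0) := by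
      rw [dc]
      push_cast
      rfl
    rw [Qf, hcast, ← Finset.sum_neg_distrib]
    rw [← Finset.sum_subset (Finset.subset_univ s) ?van]
    case van =>
      intro u _ hu
      refine Finset.sum_eq_zero fun v _ => ?_
      rw [hfe u hu]
      split <;> ring
    refine Finset.sum_congr rfl fun u hu => ?_
    rw [← Finset.sum_neg_distrib, ← Finset.sum_subset (Finset.subset_univ s) ?van2]
    case van2 =>
      intro v _ hv
      rw [hfe v hv]
      split <;> ring
    exact Finset.sum_congr rfl fun v hv => hterm u hu v hv
  have hff : f ⬝ᵥ f = (s.card : ℝ) := by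
    rw [dotProduct, ← Finset.sum_subset (Finset.subset_univ s) ?van3]
    case van3 =>
      intro u _ hu
      rw [hfe u hu, mul_zero]
    have : ∀ u ∈ s, f u * f u = 1 := by
      intro u hu
      rw [hs, Finset.mem_union] at hu
      rcases hu with hu | hu
      · rw [f₁ u hu]; ring
      · rw [f₂ u hu]; ring
    rw [Finset.sum_congr rfl this, Finset.sum_const, nsmul_eq_mul, mul_one]
  have h := lambdaMin_rayleigh G f
  rw [hff, hQf] at h
  have hc : (0:ℝ) < (s.card : ℝ) := by exact_mod_cast Finset.card_pos.mpr hne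
  have hdc2 : ((dc G s : ℕ) : ℝ) = 2 * (inducedEdgeCount G s : ℝ) := by
    exact_mod_cast congrArg (fun n : ℕ => (n:ℝ)) (dc_eq G s)
  rw [hxval]
  have hrw : -(2 * (inducedEdgeCount G s : ℝ) / (s.card : ℝ)) =
      (-(2 * (inducedEdgeCount G s : ℝ))) / (s.card : ℝ) := by ring
  rw [hrw, le_div_iff₀ hc]
  rw [hdc2] at h
  linarith

theorem iota_nonneg (G : SimpleGraph V) [Nonempty V] : 0 ≤ iota G :=
  le_csSup (iotaSet_bddAbove G) (zero_mem_iotaSet G)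

theorem lambdaMin_le_neg_iota (G : SimpleGraph V) [Nonempty V] :
    lambdaMin G ≤ -iota G := by
  have h : iota G ≤ -lambdaMin G := by
    rw [iota_eq_sSup]
    refine csSup_le ⟨0, zero_mem_iotaSet G⟩ fun x hx => ?_
    have := lambdaMin_le_neg_iotaSet G hx
    linarith
  linarith

section BoxAux
variable {α β : Type} [Fintype α] [DecidableEq α] [Fintype β] [DecidableEq β]

theorem dot_split₁ (w : α × β → ℝ) :
    w ⬝ᵥ w = ∑ b, (fun a => w (a,b)) ⬝ᵥ (fun a => w (a,b)) := by
  simp only [dotProduct, Fintype.sum_prod_type]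
  exact Finset.sum_comm

theorem dot_split₂ (w : α × β → ℝ) :
    w ⬝ᵥ w = ∑ a, (fun b => w (a,b)) ⬝ᵥ (fun b => w (a,b)) := by
  simp only [dotProduct, Fintype.sum_prod_type]

theorem Qf_boxProd (G₁ : SimpleGraph α) (G₂ : SimpleGraph β) (w : α × β → ℝ) :
    Qf (G₁ □ G₂) w = (∑ b, Qf G₁ (fun a => w (a,b))) + ∑ a, Qf G₂ (fun b => w (a,b)) := by
  classical
  have key : ∀ p q : α × β,
      (if (G₁ □ G₂).Adj p q then w p * w q else 0) =
      (if G₁.Adj p.1 q.1 ∧ p.2 = q.2 then w p * w q else 0) +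
      (if p.1 = q.1 ∧ G₂.Adj p.2 q.2 then w p * w q else 0) := by
    intro p q
    by_cases h1 : G₁.Adj p.1 q.1 ∧ p.2 = q.2 <;> by_cases h2 : p.1 = q.1 ∧ G₂.Adj p.2 q.2
    · exact absurd (h2.1 ▸ h1.1) (G₁.irrefl)
    · simp [SimpleGraph.boxProd_adj, h1, h2]
    · simp [SimpleGraph.boxProd_adj, h1, h2]
    · simp only [SimpleGraph.boxProd_adj]
      rw [if_neg (by tauto), if_neg h1, if_neg h2, add_zero]
  have hsplit : Qf (G₁ □ G₂) w =
      (∑ p : α × β, ∑ q : α × β, if G₁.Adj p.1 q.1 ∧ p.2 = q.2 then w p * w q else 0) +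
      (∑ p : α × β, ∑ q : α × β, if p.1 = q.1 ∧ G₂.Adj p.2 q.2 then w p * w q else 0) := by
    rw [Qf, ← Finset.sum_add_distrib]
    refine Finset.sum_congr rfl fun p _ => ?_
    rw [← Finset.sum_add_distrib]
    exact Finset.sum_congr rfl fun q _ => key p q
  have key1 : ∀ (a a' : α) (b : β),
      (∑ b', if G₁.Adj a a' ∧ b = b' then w (a,b) * w (a',b') else 0) =
      (if G₁.Adj a a' then w (a,b) * w (a',b) else 0) := by
    intro a a' b
    by_cases h : G₁.Adj a a' <;> simp [h]
  have key2 : ∀ (a : α) (b : β),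
      (∑ a', ∑ b', if a = a' ∧ G₂.Adj b b' then w (a,b) * w (a',b') else 0) =
      ∑ b', if G₂.Adj b b' then w (a,b) * w (a,b') else 0 := by
    intro a b
    rw [Finset.sum_comm]
    refine Finset.sum_congr rfl fun b' _ => ?_
    by_cases h : G₂.Adj b b' <;> simp [h]
  rw [hsplit]
  congr 1
  · rw [Fintype.sum_prod_type]
    have hin : ∀ (a : α) (b : β),
        (∑ q : α × β, if G₁.Adj a q.1 ∧ b = q.2 then w (a,b) * w q else 0) =
        ∑ a', if G₁.Adj a a' then w (a,b) * w (a',b) else 0 := by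
      intro a b
      rw [Fintype.sum_prod_type]
      exact Finset.sum_congr rfl fun a' _ => key1 a a' b
    calc (∑ a, ∑ b, ∑ q : α × β, if G₁.Adj a q.1 ∧ b = q.2 then w (a,b) * w q else 0)
        = ∑ a, ∑ b, ∑ a', if G₁.Adj a a' then w (a,b) * w (a',b) else 0 :=
          Finset.sum_congr rfl fun a _ => Finset.sum_congr rfl fun b _ => hin a b
      _ = ∑ b, ∑ a, ∑ a', if G₁.Adj a a' then w (a,b) * w (a',b) else 0 := Finset.sum_comm
      _ = ∑ b, Qf G₁ (fun a => w (a,b)) := by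
          refine Finset.sum_congr rfl fun b _ => ?_
          rw [Qf]
  · rw [Fintype.sum_prod_type]
    refine Finset.sum_congr rfl fun a _ => ?_
    calc (∑ b, ∑ q : α × β, if a = q.1 ∧ G₂.Adj b q.2 then w (a,b) * w q else 0)
        = ∑ b, ∑ a', ∑ b', if a = a' ∧ G₂.Adj b b' then w (a,b) * w (a',b') else 0 := by
          refine Finset.sum_congr rfl fun b _ => ?_
          rw [Fintype.sum_prod_type]
      _ = ∑ b, ∑ b', if G₂.Adj b b' then w (a,b) * w (a,b') else 0 :=
          Finset.sum_congr rfl fun b _ => key2 a b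
      _ = Qf G₂ (fun b => w (a,b)) := by rw [Qf]

theorem lambdaMin_boxProd (G₁ : SimpleGraph α) (G₂ : SimpleGraph β)
    [Nonempty α] [Nonempty β] :
    lambdaMin (G₁ □ G₂) = lambdaMin G₁ + lambdaMin G₂ := by
  apply le_antisymm
  · obtain ⟨v₁, hv₁0, hv₁⟩ := lambdaMin_eigQ G₁
    obtain ⟨v₂, hv₂0, hv₂⟩ := lambdaMin_eigQ G₂
    set w : α × β → ℝ := fun p => v₁ p.1 * v₂ p.2 with hwdef
    have hw0 : w ≠ 0 := by
      obtain ⟨a, ha⟩ := Function.ne_iff.mp hv₁0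
      obtain ⟨b, hb⟩ := Function.ne_iff.mp hv₂0
      exact Function.ne_iff.mpr ⟨(a,b), mul_ne_zero ha hb⟩
    have hww : w ⬝ᵥ w = (v₁ ⬝ᵥ v₁) * (v₂ ⬝ᵥ v₂) := by
      simp only [dotProduct, Fintype.sum_prod_type, Finset.sum_mul_sum]
      exact Finset.sum_congr rfl fun a _ => Finset.sum_congr rfl fun b _ => by ring
    have hcol : ∀ b, (fun a => w (a,b)) = (v₂ b) • v₁ := by
      intro b; funext a; simp [hwdef, mul_comm]
    have hrow : ∀ a, (fun b => w (a,b)) = (v₁ a) • v₂ := by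
      intro a; funext b; simp [hwdef]
    have hQ : Qf (G₁ □ G₂) w = (lambdaMin G₁ + lambdaMin G₂) * (w ⬝ᵥ w) := by
      rw [Qf_boxProd]
      have e1 : (∑ b, Qf G₁ (fun a => w (a,b))) = (v₂ ⬝ᵥ v₂) * (lambdaMin G₁ * (v₁ ⬝ᵥ v₁)) := by
        rw [← hv₁, dotProduct, Finset.sum_mul]
        exact Finset.sum_congr rfl fun b _ => by rw [hcol b, Qf_smul]; ring
      have e2 : (∑ a, Qf G₂ (fun b => w (a,b))) = (v₁ ⬝ᵥ v₁) * (lambdaMin G₂ * (v₂ ⬝ᵥ v₂)) := by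
        rw [← hv₂, dotProduct, Finset.sum_mul]
        exact Finset.sum_congr rfl fun a _ => by rw [hrow a, Qf_smul]; ring
      rw [e1, e2, hww]
      ring
    have h := lambdaMin_rayleigh (G₁ □ G₂) w
    rw [hQ] at h
    exact le_of_mul_le_mul_right h (dot_self_pos hw0)
  · obtain ⟨w, hw0, hw⟩ := lambdaMin_eigQ (G₁ □ G₂)
    have hbound : (lambdaMin G₁ + lambdaMin G₂) * (w ⬝ᵥ w) ≤ Qf (G₁ □ G₂) w := by
      rw [Qf_boxProd, add_mul]
      apply add_le_add
      · rw [dot_split₁ w, Finset.mul_sum]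
        exact Finset.sum_le_sum fun b _ => lambdaMin_rayleigh G₁ _
      · rw [dot_split₂ w, Finset.mul_sum]
        exact Finset.sum_le_sum fun a _ => lambdaMin_rayleigh G₂ _
    rw [hw] at hbound
    exact le_of_mul_le_mul_right hbound (dot_self_pos hw0)

open Classical in
theorem dc_box (G₁ : SimpleGraph α) (G₂ : SimpleGraph β) (S : Finset α) (T : Finset β) :
    dc (G₁ □ G₂) (S ×ˢ T) = T.card * dc G₁ S + S.card * dc G₂ T := by
  classical
  have key : ∀ p q : α × β,
      (if (G₁ □ G₂).Adj p q then (1:ℕ) else 0) =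
      (if G₁.Adj p.1 q.1 ∧ p.2 = q.2 then (1:ℕ) else 0) +
      (if p.1 = q.1 ∧ G₂.Adj p.2 q.2 then (1:ℕ) else 0) := by
    intro p q
    by_cases h1 : G₁.Adj p.1 q.1 ∧ p.2 = q.2 <;> by_cases h2 : p.1 = q.1 ∧ G₂.Adj p.2 q.2
    · exact absurd (h2.1 ▸ h1.1) (G₁.irrefl)
    · simp [SimpleGraph.boxProd_adj, h1, h2]
    · simp [SimpleGraph.boxProd_adj, h1, h2]
    · simp only [SimpleGraph.boxProd_adj]
      rw [if_neg (by tauto), if_neg h1, if_neg h2, add_zero]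
  rw [dc]
  have hsplit : (∑ p ∈ S ×ˢ T, ∑ q ∈ S ×ˢ T, if (G₁ □ G₂).Adj p q then (1:ℕ) else 0) =
      (∑ p ∈ S ×ˢ T, ∑ q ∈ S ×ˢ T, if G₁.Adj p.1 q.1 ∧ p.2 = q.2 then (1:ℕ) else 0) +
      (∑ p ∈ S ×ˢ T, ∑ q ∈ S ×ˢ T, if p.1 = q.1 ∧ G₂.Adj p.2 q.2 then (1:ℕ) else 0) := by
    rw [← Finset.sum_add_distrib]
    refine Finset.sum_congr rfl fun p _ => ?_
    rw [← Finset.sum_add_distrib]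
    exact Finset.sum_congr rfl fun q _ => key p q
  rw [hsplit]
  congr 1
  · rw [Finset.sum_product]
    have inner1 : ∀ a, ∀ b ∈ T,
        (∑ q ∈ S ×ˢ T, if G₁.Adj a q.1 ∧ b = q.2 then (1:ℕ) else 0) =
        ∑ a' ∈ S, if G₁.Adj a a' then 1 else 0 := by
      intro a b hb
      rw [Finset.sum_product]
      refine Finset.sum_congr rfl fun a' _ => ?_
      by_cases h : G₁.Adj a a' <;> simp [h, hb]
    calc (∑ a ∈ S, ∑ b ∈ T, ∑ q ∈ S ×ˢ T, if G₁.Adj a q.1 ∧ b = q.2 then (1:ℕ) else 0)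
        = ∑ a ∈ S, ∑ _b ∈ T, ∑ a' ∈ S, if G₁.Adj a a' then (1:ℕ) else 0 :=
          Finset.sum_congr rfl fun a _ => Finset.sum_congr rfl fun b hb => inner1 a b hb
      _ = T.card * dc G₁ S := by
          rw [dc, Finset.mul_sum]
          refine Finset.sum_congr rfl fun a _ => ?_
          rw [Finset.sum_const, smul_eq_mul]
  · rw [Finset.sum_product]
    have inner2 : ∀ a ∈ S, ∀ b,
        (∑ q ∈ S ×ˢ T, if a = q.1 ∧ G₂.Adj b q.2 then (1:ℕ) else 0) =
        ∑ b' ∈ T, if G₂.Adj b b' then 1 else 0 := by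
      intro a ha b
      rw [Finset.sum_product, Finset.sum_comm]
      refine Finset.sum_congr rfl fun b' _ => ?_
      by_cases h : G₂.Adj b b' <;> simp [h, ha]
    calc (∑ a ∈ S, ∑ b ∈ T, ∑ q ∈ S ×ˢ T, if a = q.1 ∧ G₂.Adj b q.2 then (1:ℕ) else 0)
        = ∑ a ∈ S, ∑ b ∈ T, ∑ b' ∈ T, if G₂.Adj b b' then (1:ℕ) else 0 :=
          Finset.sum_congr rfl fun a ha => Finset.sum_congr rfl fun b _ => inner2 a ha b
      _ = S.card * dc G₂ T := by
          rw [dc, Finset.sum_const, smul_eq_mul]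

theorem iec_box (G₁ : SimpleGraph α) (G₂ : SimpleGraph β) (S : Finset α) (T : Finset β) :
    inducedEdgeCount (G₁ □ G₂) (S ×ˢ T) =
      T.card * inducedEdgeCount G₁ S + S.card * inducedEdgeCount G₂ T := by
  have h := dc_box G₁ G₂ S T
  rw [dc_eq, dc_eq, dc_eq] at h
  ring_nf at h ⊢
  omega

theorem indep_box {G₁ : SimpleGraph α} {G₂ : SimpleGraph β} {A₁ A₂ : Finset α} {B₁ B₂ : Finset β}
    (hA₁ : IsIndepFinset G₁ A₁) (hA₂ : IsIndepFinset G₁ A₂)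
    (hB₁ : IsIndepFinset G₂ B₁) (hB₂ : IsIndepFinset G₂ B₂)
    (hdA : Disjoint A₁ A₂) (hdB : Disjoint B₁ B₂) :
    IsIndepFinset (G₁ □ G₂) (A₁ ×ˢ B₁ ∪ A₂ ×ˢ B₂) := by
  intro u hu v hv hadj
  rw [SimpleGraph.boxProd_adj] at hadj
  simp only [Finset.mem_union, Finset.mem_product] at hu hv
  have dA := Finset.disjoint_left.mp hdA
  have dB := Finset.disjoint_left.mp hdB
  rcases hu with ⟨hu1, hu2⟩ | ⟨hu1, hu2⟩ <;> rcases hv with ⟨hv1, hv2⟩ | ⟨hv1, hv2⟩ <;>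
    rcases hadj with h | h
  all_goals first
    | exact hA₁ _ hu1 _ hv1 h.1
    | exact hA₂ _ hu1 _ hv1 h.1
    | exact hB₁ _ hu2 _ hv2 h.2
    | exact hB₂ _ hu2 _ hv2 h.2
    | exact dB hu2 (by rw [h.2]; exact hv2)
    | exact dB (by rw [h.2]; exact hv2) hu2
    | exact hB₁ _ hu2 _ hv2 h.1
    | exact hB₂ _ hu2 _ hv2 h.1
    | exact dA hu1 (by rw [h.2]; exact hv1)
    | exact dA (by rw [h.2]; exact hv1) hu1
    | exact dA hu1 (by rw [h.1]; exact hv1)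
    | exact dA (by rw [h.1]; exact hv1) hu1

theorem add_mem_iotaSet_box (G₁ : SimpleGraph α) (G₂ : SimpleGraph β) {x₁ x₂ : ℝ}
    (h₁ : x₁ ∈ iotaSet G₁) (h₂ : x₂ ∈ iotaSet G₂) :
    x₁ + x₂ ∈ iotaSet (G₁ □ G₂) := by
  classical
  obtain ⟨A₁, A₂, hneA, hdA, hIA₁, hIA₂, hx₁⟩ := h₁
  obtain ⟨B₁, B₂, hneB, hdB, hIB₁, hIB₂, hx₂⟩ := h₂
  have hU : (A₁ ×ˢ B₁ ∪ A₂ ×ˢ B₂) ∪ (A₁ ×ˢ B₂ ∪ A₂ ×ˢ B₁) = (A₁ ∪ A₂) ×ˢ (B₁ ∪ B₂) := by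
    ext p
    simp only [Finset.mem_union, Finset.mem_product]
    tauto
  refine ⟨A₁ ×ˢ B₁ ∪ A₂ ×ˢ B₂, A₁ ×ˢ B₂ ∪ A₂ ×ˢ B₁, ?_, ?_, ?_, ?_, ?_⟩
  · rw [hU]
    exact hneA.product hneB
  · rw [Finset.disjoint_left]
    intro p hp hq
    simp only [Finset.mem_union, Finset.mem_product] at hp hq
    have dA := Finset.disjoint_left.mp hdA
    have dB := Finset.disjoint_left.mp hdB
    tauto
  · exact indep_box hIA₁ hIA₂ hIB₁ hIB₂ hdA hdB
  · exact indep_box hIA₁ hIA₂ hIB₂ hIB₁ hdA hdB.symm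
  · rw [hU, iec_box, Finset.card_product]
    have hcA : (0:ℝ) < ((A₁ ∪ A₂).card : ℝ) := by exact_mod_cast Finset.card_pos.mpr hneA
    have hcB : (0:ℝ) < ((B₁ ∪ B₂).card : ℝ) := by exact_mod_cast Finset.card_pos.mpr hneB
    rw [hx₁, hx₂]
    rw [div_add_div _ _ (ne_of_gt hcA) (ne_of_gt hcB), div_eq_div_iff (by positivity) (by positivity)]
    push_cast
    ring

end BoxAux

/-- Proposition 3.1. If `λ(G₁) = -ι(G₁)` and `λ(G₂) = -ι(G₂)`, then
`λ(G₁ □ G₂) = -ι(G₁ □ G₂)` for the Cartesian (box) product. -/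
theorem lambdaMin_boxProd_eq_neg_iota {α β : Type} [Fintype α] [DecidableEq α]
    [Fintype β] [DecidableEq β] (G₁ : SimpleGraph α) (G₂ : SimpleGraph β)
    (hα : 2 ≤ Fintype.card α) (hβ : 2 ≤ Fintype.card β)
    (h₁ : lambdaMin G₁ = -iota G₁) (h₂ : lambdaMin G₂ = -iota G₂) :
    lambdaMin (G₁ □ G₂) = -iota (G₁ □ G₂) := by
  haveI : Nonempty α := Fintype.card_pos_iff.mp (by omega)
  haveI : Nonempty β := Fintype.card_pos_iff.mp (by omega)
  have hlam : lambdaMin (G₁ □ G₂) = lambdaMin G₁ + lambdaMin G₂ := lambdaMin_boxProd G₁ G₂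
  have hle : lambdaMin (G₁ □ G₂) ≤ -iota (G₁ □ G₂) := lambdaMin_le_neg_iota (G₁ □ G₂)
  have hge : iota G₁ + iota G₂ ≤ iota (G₁ □ G₂) := by
    have hb := iotaSet_bddAbove (G₁ □ G₂)
    have kk : ∀ x₁ ∈ iotaSet G₁, ∀ x₂ ∈ iotaSet G₂, x₁ + x₂ ≤ iota (G₁ □ G₂) :=
      fun x₁ hx₁ x₂ hx₂ => le_csSup hb (add_mem_iotaSet_box G₁ G₂ hx₁ hx₂)
    have s1 : iota G₁ ≤ iota (G₁ □ G₂) - iota G₂ := by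
      rw [iota_eq_sSup G₁]
      refine csSup_le ⟨0, zero_mem_iotaSet G₁⟩ fun x₁ hx₁ => ?_
      have s2 : iota G₂ ≤ iota (G₁ □ G₂) - x₁ := by
        rw [iota_eq_sSup G₂]
        refine csSup_le ⟨0, zero_mem_iotaSet G₂⟩ fun x₂ hx₂ => ?_
        linarith [kk x₁ hx₁ x₂ hx₂]
      linarith
    linarith
  linarith
end

section
/- Let d ≥ 1 and t ≥ 1, and let G be a d-regular bipartite simple graph on 2t vertices whose bipartition has two parts of size t each. Then the independence number of G equals t, the smallest adjacency eigenvalue of G equals -d, and hence λ(G) = -|E(G)| / (C(χ(G), 2) · θ(G)); i.e., the bound λ(G) ≤ -|E(G)|/(C(χ(G),2)·θ(G)) holds with equality. -/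
/-!
Common definitions: smallest adjacency eigenvalue, independent vertex sets,
edge counts of induced subgraphs, chromatic number, independence number,
and the invariants `η`, `ι`, `θ` from the paper.
-/

open Finset SimpleGraph Matrix

set_option linter.unusedSectionVars false

variable {V : Type} [Fintype V] [DecidableEq V]

section Aux

lemma spectrum_eq_range_eig {n : Type} [Fintype n] [DecidableEq n] (A : Matrix n n ℝ)
    (hA : A.IsHermitian) : spectrum ℝ A = Set.range hA.eigenvalues := by
  conv_lhs => rw [hA.spectral_theorem]
  have h0 : (hA.eigenvectorUnitary : Matrix n n ℝ) =
      ((Unitary.toUnits hA.eigenvectorUnitary : (Matrix n n ℝ)ˣ) : Matrix n n ℝ) := rfl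
  have h1 : (star hA.eigenvectorUnitary : Matrix n n ℝ) =
      ((Unitary.toUnits hA.eigenvectorUnitary)⁻¹ : (Matrix n n ℝ)ˣ) := rfl
  rw [Unitary.conjStarAlgAut_apply, h1, h0, spectrum.units_conjugate,
    show (RCLike.ofReal ∘ hA.eigenvalues : n → ℝ) = hA.eigenvalues from rfl,
    spectrum_diagonal]

lemma mem_spectrum_of_eigenvec {n : Type} [Fintype n] [DecidableEq n] (M : Matrix n n ℝ)
    (μ : ℝ) (x : n → ℝ) (hx : x ≠ 0) (h : M *ᵥ x = μ • x) : μ ∈ spectrum ℝ M := by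
  rw [spectrum.mem_iff]
  intro hu
  rw [Matrix.isUnit_iff_isUnit_det] at hu
  have hdet : (algebraMap ℝ (Matrix n n ℝ) μ - M).det = 0 := by
    rw [← Matrix.exists_mulVec_eq_zero_iff]
    refine ⟨x, hx, ?_⟩
    rw [Matrix.sub_mulVec, h, Algebra.algebraMap_eq_smul_one, Matrix.smul_mulVec,
      Matrix.one_mulVec, sub_self]
  rw [hdet] at hu
  exact hu.ne_zero rfl

lemma inf_eigenvalues_eq {n : Type} [Fintype n] [DecidableEq n] [Nonempty n]
    (M : Matrix n n ℝ) (hM : M.IsHermitian) (d : ℝ)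
    (hpos : ∀ i j, 0 ≤ M i j) (hrow : ∀ i, ∑ j, M i j = d)
    (x : n → ℝ) (hx : x ≠ 0) (hMx : M *ᵥ x = (-d) • x) :
    (⨅ i, hM.eigenvalues i) = -d := by
  have hlow : ∀ i, -d ≤ hM.eigenvalues i := by
    intro i
    set μ := hM.eigenvalues i with hμ
    set w : n → ℝ := ⇑(hM.eigenvectorBasis i) with hw
    have hw0 : w ≠ 0 := by
      intro h0
      exact hM.eigenvectorBasis.orthonormal.ne_zero i (by ext j; exact congrFun h0 j)
    have hMw : M *ᵥ w = μ • w := hM.mulVec_eigenvectorBasis i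
    obtain ⟨j, -, hj⟩ := Finset.exists_max_image Finset.univ (fun k => |w k|)
      ⟨Classical.arbitrary n, Finset.mem_univ _⟩
    have hwj : 0 < |w j| := by
      rcases (abs_nonneg (w j)).lt_or_eq with h | h
      · exact h
      · exfalso; apply hw0; ext k
        have := hj k (Finset.mem_univ k)
        rw [← h] at this
        simpa using le_antisymm this (abs_nonneg _)
    have hkey : |μ| * |w j| ≤ d * |w j| := by
      calc |μ| * |w j| = |(M *ᵥ w) j| := by rw [hMw]; simp [abs_mul]
        _ = |∑ u, M j u * w u| := by rw [Matrix.mulVec, dotProduct]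
        _ ≤ ∑ u, |M j u * w u| := Finset.abs_sum_le_sum_abs _ _
        _ = ∑ u, M j u * |w u| := by
            refine Finset.sum_congr rfl fun u _ => ?_
            rw [abs_mul, abs_of_nonneg (hpos j u)]
        _ ≤ ∑ u, M j u * |w j| :=
            Finset.sum_le_sum fun u _ =>
              mul_le_mul_of_nonneg_left (hj u (Finset.mem_univ u)) (hpos j u)
        _ = d * |w j| := by rw [← Finset.sum_mul, hrow]
    have habs : |μ| ≤ d := le_of_mul_le_mul_right hkey hwj
    have := neg_abs_le μ
    linarith
  obtain ⟨i0, hi0⟩ : ∃ i, hM.eigenvalues i = -d := by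
    have h2 := mem_spectrum_of_eigenvec M (-d) x hx hMx
    rwa [spectrum_eq_range_eig M hM] at h2
  refine le_antisymm ?_ (le_ciInf hlow)
  calc (⨅ i, hM.eigenvalues i) ≤ hM.eigenvalues i0 :=
        ciInf_le ⟨-d, fun y ⟨i, hy⟩ => hy ▸ hlow i⟩ i0
    _ = -d := hi0

lemma adj_inf_eig (G : SimpleGraph V) [DecidableRel G.Adj] [Nonempty V]
    (d : ℕ) (A B : Finset V) (hunion : A ∪ B = Finset.univ)
    (hAne : A.Nonempty)
    (hiA : IsIndepFinset G A) (hiB : IsIndepFinset G B)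
    (hreg : ∀ v : V, (G.neighborSet v).ncard = d) :
    (⨅ i, (adj_isHermitian G).eigenvalues i) = -(d : ℝ) := by
  have hnf : ∀ v : V, (G.neighborFinset v).card = d := by
    intro v
    rw [← hreg v, SimpleGraph.neighborFinset, Set.ncard_eq_toFinset_card']
  have hnbA : ∀ v ∈ A, ∀ u ∈ G.neighborFinset v, u ∈ B ∧ u ∉ A := by
    intro v hv u hu
    rw [SimpleGraph.mem_neighborFinset] at hu
    have huA : u ∉ A := fun h => hiA v hv u h hu
    have : u ∈ A ∪ B := hunion ▸ Finset.mem_univ u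
    exact ⟨(Finset.mem_union.1 this).resolve_left huA, huA⟩
  have hnbB : ∀ v : V, v ∉ A → ∀ u ∈ G.neighborFinset v, u ∈ A := by
    intro v hv u hu
    rw [SimpleGraph.mem_neighborFinset] at hu
    have hvB : v ∈ B := by
      have : v ∈ A ∪ B := hunion ▸ Finset.mem_univ v
      exact (Finset.mem_union.1 this).resolve_left hv
    have huB : u ∉ B := fun h => hiB v hvB u h hu
    have : u ∈ A ∪ B := hunion ▸ Finset.mem_univ u
    exact (Finset.mem_union.1 this).resolve_right huB
  set x : V → ℝ := fun v => if v ∈ A then 1 else -1 with hxdef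
  refine inf_eigenvalues_eq (G.adjMatrix ℝ) (adj_isHermitian G) (d : ℝ) ?_ ?_ x ?_ ?_
  · intro i j; rw [SimpleGraph.adjMatrix_apply]; positivity
  · intro i
    have : ∀ j, G.adjMatrix ℝ i j = if j ∈ G.neighborFinset i then (1:ℝ) else 0 := by
      intro j; simp [SimpleGraph.mem_neighborFinset]
    simp_rw [this]
    rw [Finset.sum_ite_mem, Finset.univ_inter, Finset.sum_const, hnf i]
    simp
  · intro h
    obtain ⟨v, hv⟩ := hAne
    have := congrFun h v
    simp [hxdef, hv] at this
  · ext v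
    rw [SimpleGraph.adjMatrix_mulVec_apply]
    by_cases hv : v ∈ A
    · have : ∀ u ∈ G.neighborFinset v, x u = -1 := by
        intro u hu; simp [hxdef, (hnbA v hv u hu).2]
      rw [Finset.sum_congr rfl this, Finset.sum_const, hnf v]
      simp [hxdef, hv]
    · have : ∀ u ∈ G.neighborFinset v, x u = 1 := by
        intro u hu; simp [hxdef, hnbB v hv u hu]
      rw [Finset.sum_congr rfl this, Finset.sum_const, hnf v]
      simp [hxdef, hv]

lemma indep_card_le (G : SimpleGraph V) [DecidableRel G.Adj]
    (d t : ℕ) (hd : 1 ≤ d) (A B : Finset V)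
    (hdisj : Disjoint A B) (hunion : A ∪ B = Finset.univ)
    (hB : B.card = t)
    (hiA : IsIndepFinset G A)
    (hreg : ∀ v : V, G.degree v = d)
    (s : Finset V) (hs : IsIndepFinset G s) : s.card ≤ t := by
  set a := s ∩ A with ha
  set b := s ∩ B with hb
  have hsplit : s.card = a.card + b.card := by
    rw [← Finset.card_union_of_disjoint
      (Finset.disjoint_of_subset_left Finset.inter_subset_right
        (Finset.disjoint_of_subset_right Finset.inter_subset_right hdisj)),
      ← Finset.inter_union_distrib_left, hunion, Finset.inter_univ]
  have hnb : ∀ u ∈ a, G.neighborFinset u ⊆ B \ s := by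
    intro u hu w hw
    rw [SimpleGraph.mem_neighborFinset] at hw
    rw [ha, Finset.mem_inter] at hu
    have hwA : w ∉ A := fun h => hiA u hu.2 w h hw
    have hws : w ∉ s := fun h => hs u hu.1 w h hw
    have : w ∈ A ∪ B := hunion ▸ Finset.mem_univ w
    exact Finset.mem_sdiff.2 ⟨(Finset.mem_union.1 this).resolve_left hwA, hws⟩
  have key : d * a.card ≤ d * (B \ s).card := by
    calc d * a.card = ∑ u ∈ a, d := by rw [Finset.sum_const, smul_eq_mul, mul_comm]
      _ = ∑ u ∈ a, ∑ w ∈ B \ s, (if G.Adj u w then 1 else 0) := by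
          refine Finset.sum_congr rfl fun u hu => ?_
          have hfilt : (B \ s).filter (G.Adj u ·) = G.neighborFinset u := by
            ext w
            simp only [Finset.mem_filter, SimpleGraph.mem_neighborFinset]
            exact ⟨fun h => h.2, fun h => ⟨hnb u hu (by rwa [SimpleGraph.mem_neighborFinset]), h⟩⟩
          rw [← Finset.card_filter, hfilt, ← SimpleGraph.degree, hreg]
      _ = ∑ w ∈ B \ s, ∑ u ∈ a, (if G.Adj u w then 1 else 0) := Finset.sum_comm
      _ ≤ ∑ w ∈ B \ s, d := by
          refine Finset.sum_le_sum fun w _ => ?_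
          calc ∑ u ∈ a, (if G.Adj u w then 1 else 0)
              ≤ ∑ u : V, (if G.Adj u w then 1 else 0) :=
                Finset.sum_le_sum_of_subset (Finset.subset_univ a)
            _ = (Finset.univ.filter (G.Adj w ·)).card := by
                rw [Finset.card_filter]
                exact Finset.sum_congr rfl fun u _ => if_congr (G.adj_comm u w) rfl rfl
            _ = d := by rw [← SimpleGraph.neighborFinset_eq_filter, ← SimpleGraph.degree, hreg]
      _ = d * (B \ s).card := by rw [Finset.sum_const, smul_eq_mul, mul_comm]
  have hbB : b ⊆ B := Finset.inter_subset_right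
  have hBs : (B \ s).card = t - b.card := by
    have : B \ s = B \ b := by
      ext w; simp only [hb, Finset.mem_sdiff, Finset.mem_inter]; tauto
    rw [this, Finset.card_sdiff_of_subset hbB, hB]
  rw [hBs] at key
  have h1 : a.card ≤ t - b.card := Nat.le_of_mul_le_mul_left key hd
  have h2 : b.card ≤ t := hB ▸ Finset.card_le_card hbB
  omega

end Aux

/-- Subsection 3.2. Let `G` be a `d`-regular bipartite graph on `2t`
vertices whose bipartition `A ∪ B` has parts of size `t`. Then `α(G) = t`, `λ(G) = -d`,
and the bound of Theorem 2.7 holds with equality: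
`λ(G) = -|E(G)| / (C(χ(G), 2) · θ(G))`. -/
theorem regular_bipartite_bound_sharp (G : SimpleGraph V) [DecidableRel G.Adj]
    (d t : ℕ) (hd : 1 ≤ d) (ht : 1 ≤ t) (hcard : Fintype.card V = 2 * t)
    (A B : Finset V) (hdisj : Disjoint A B) (hunion : A ∪ B = Finset.univ)
    (hA : A.card = t) (hB : B.card = t)
    (hiA : IsIndepFinset G A) (hiB : IsIndepFinset G B)
    (hreg : ∀ v : V, G.degree v = d) :
    _root_.indepNum G = t ∧ lambdaMin G = -(d : ℝ) ∧
      lambdaMin G = -(edgeCount G : ℝ) / (((chromNum G).choose 2 : ℝ) * theta G) := by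
  have hne : Nonempty V := Fintype.card_pos_iff.mp (by omega)
  have hAne : A.Nonempty := Finset.card_pos.mp (by omega)
  have hindep : _root_.indepNum G = t := by
    apply le_antisymm
    · refine csSup_le ⟨t, A, hiA, hA⟩ ?_
      rintro k ⟨s, hs, rfl⟩
      exact indep_card_le G d t hd A B hdisj hunion hB hiA hreg s hs
    · exact le_csSup ⟨t, fun k ⟨s, hs, hk⟩ =>
        hk ▸ indep_card_le G d t hd A B hdisj hunion hB hiA hreg s hs⟩ ⟨A, hiA, hA⟩
  have hreg' : ∀ v : V, (G.neighborSet v).ncard = d := by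
    intro v
    rw [Set.ncard_eq_toFinset_card']
    exact hreg v
  have hlam : lambdaMin G = -(d : ℝ) := by
    exact @adj_inf_eig V _ _ G (Classical.decRel G.Adj) hne d A B hunion hAne hiA hiB hreg'
  have hE : edgeCount G = d * t := by
    have h2 := SimpleGraph.sum_degrees_eq_twice_card_edges G
    rw [Finset.sum_congr rfl (fun v _ => hreg v), Finset.sum_const, smul_eq_mul,
      Finset.card_univ, hcard] at h2
    have h3 : edgeCount G = G.edgeFinset.card := by
      rw [edgeCount, Nat.card_coe_set_eq, Set.ncard_eq_toFinset_card']
      congr 1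
    have h5 : 2 * (d * t) = 2 * G.edgeFinset.card := by rw [← h2]; ring
    rw [h3, ← Nat.eq_of_mul_eq_mul_left (by norm_num) h5]
  have hcol : G.Colorable 2 := by
    refine ⟨SimpleGraph.Coloring.mk (fun v => if v ∈ A then (0 : Fin 2) else 1) ?_⟩
    intro u v huv
    by_cases hu : u ∈ A <;> by_cases hv : v ∈ A <;> simp only [hu, hv, if_true, if_false]
    · exact absurd huv (hiA u hu v hv)
    · decide
    · decide
    · have huB : u ∈ B := by
        have : u ∈ A ∪ B := hunion ▸ Finset.mem_univ u
        exact (Finset.mem_union.1 this).resolve_left hu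
      have hvB : v ∈ B := by
        have : v ∈ A ∪ B := hunion ▸ Finset.mem_univ v
        exact (Finset.mem_union.1 this).resolve_left hv
      exact absurd huv (hiB u huB v hvB)
  have hadj : ∃ u v : V, G.Adj u v := by
    obtain ⟨v, hv⟩ := hAne
    have hdv : 0 < G.degree v := by rw [hreg v]; omega
    obtain ⟨u, hu⟩ := Finset.card_pos.mp hdv
    exact ⟨v, u, (SimpleGraph.mem_neighborFinset G v u).mp hu⟩
  have hchrom : G.chromaticNumber = 2 := by
    refine le_antisymm (by exact_mod_cast hcol.chromaticNumber_le) ?_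
    obtain ⟨u, v, huv⟩ := hadj
    rw [show ((2 : ℕ∞)) = ((2 : ℕ) : ℕ∞) from rfl,
      SimpleGraph.le_chromaticNumber_iff_forall_surjective]
    intro C bcol
    have hne' : C u ≠ C v := C.valid huv
    have h3 : ∀ x y z : Fin 2, x ≠ y → z = x ∨ z = y := by decide
    rcases h3 (C u) (C v) bcol hne' with h | h
    exacts [⟨u, h.symm⟩, ⟨v, h.symm⟩]
  have hchn : chromNum G = 2 := by rw [chromNum, hchrom]; rfl
  have ht0 : (t : ℝ) ≠ 0 := by
    exact_mod_cast Nat.one_le_iff_ne_zero.mp ht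
  have hth : theta G = (t : ℝ) := by
    rw [theta, hindep, hcard]
    have : ((2 * t : ℕ) : ℝ) / 2 = (t : ℝ) := by push_cast; ring
    rw [this, min_self]
  refine ⟨hindep, hlam, ?_⟩
  rw [hlam, hchn, hE, hth]
  norm_num
  field_simp
end

section
/- Let k ≥ 2 and t ≥ 1, and let G be the complete k-partite graph in which each of the k parts has exactly t vertices. Then the smallest adjacency eigenvalue of G equals -t, and λ(G) = -|E(G)| / (C(χ(G), 2) · θ(G)); i.e., the bound λ(G) ≤ -|E(G)|/(C(χ(G),2)·θ(G)) holds with equality. -/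
/-!
Common definitions: smallest adjacency eigenvalue, independent vertex sets,
edge counts of induced subgraphs, chromatic number, independence number,
and the invariants `η`, `ι`, `θ` from the paper.
-/

open Finset SimpleGraph Matrix

set_option linter.unusedSectionVars false

variable {V : Type} [Fintype V] [DecidableEq V]

section Aux

open Finset Matrix SimpleGraph

/-- Auxiliary: min-eigenvalue characterization for real Hermitian matrices. -/
lemma infEig {n : Type} [Fintype n] [DecidableEq n] [Nonempty n] {A : Matrix n n ℝ}
    (hA : A.IsHermitian) (c : ℝ)
    (hlb : ∀ x : n → ℝ, -c * (x ⬝ᵥ x) ≤ x ⬝ᵥ (A *ᵥ x))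
    (x₀ : n → ℝ) (hx₀ : x₀ ≠ 0) (hAx₀ : A *ᵥ x₀ = (-c) • x₀) :
    (⨅ i, hA.eigenvalues i) = -c := by
  have hge : ∀ i, -c ≤ hA.eigenvalues i := by
    intro i
    set v : n → ℝ := ⇑(hA.eigenvectorBasis i) with hv
    have hvne : v ≠ 0 := by
      intro h
      exact hA.eigenvectorBasis.toBasis.ne_zero i (by
        ext j; exact congrFun h j)
    have hpos : 0 < v ⬝ᵥ v := by
      have : ∃ j, v j ≠ 0 := by
        by_contra h
        push_neg at h
        exact hvne (funext h)
      obtain ⟨j, hj⟩ := this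
      have : (0:ℝ) < ∑ j, v j * v j := by
        apply Finset.sum_pos' (fun j _ => mul_self_nonneg _)
        exact ⟨j, Finset.mem_univ j, mul_self_pos.mpr hj⟩
      simpa [dotProduct] using this
    have hquad : v ⬝ᵥ (A *ᵥ v) = hA.eigenvalues i * (v ⬝ᵥ v) := by
      rw [hA.mulVec_eigenvectorBasis]
      simp [dotProduct_smul, smul_eq_mul, ← hv]
    have := hlb v
    rw [hquad] at this
    nlinarith
  have hex : ∃ i, hA.eigenvalues i = -c := by
    have hdet : (A + c • 1).det = 0 := by
      rw [← Matrix.exists_mulVec_eq_zero_iff]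
      refine ⟨x₀, hx₀, ?_⟩
      simp [Matrix.add_mulVec, hAx₀, Matrix.smul_mulVec, Matrix.one_mulVec]
    have hU : (hA.eigenvectorUnitary : Matrix n n ℝ) * star (hA.eigenvectorUnitary : Matrix n n ℝ) = 1 :=
      (Matrix.mem_unitaryGroup_iff).mp (hA.eigenvectorUnitary).2
    have hsplit : A + c • 1 =
        (hA.eigenvectorUnitary : Matrix n n ℝ) *
          (Matrix.diagonal (fun i => hA.eigenvalues i + c)) *
          star (hA.eigenvectorUnitary : Matrix n n ℝ) := by
      have h1 : (Matrix.diagonal (fun i => hA.eigenvalues i + c) : Matrix n n ℝ)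
          = Matrix.diagonal (RCLike.ofReal ∘ hA.eigenvalues) + c • 1 := by
        ext i j
        by_cases h : i = j <;> simp [Matrix.diagonal, Matrix.one_apply, h]
      have hs := hA.spectral_theorem
      rw [Unitary.conjStarAlgAut_apply] at hs
      rw [h1, mul_add, add_mul, ← hs]
      congr 1
      rw [Matrix.mul_smul, Matrix.smul_mul, mul_one, hU]
    have : (∏ i, (hA.eigenvalues i + c)) = 0 := by
      have := congrArg Matrix.det hsplit
      rw [hdet, Matrix.det_mul, Matrix.det_mul, Matrix.det_diagonal] at this
      have h2 : (hA.eigenvectorUnitary : Matrix n n ℝ).det *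
          (star (hA.eigenvectorUnitary : Matrix n n ℝ)).det = 1 := by
        rw [← Matrix.det_mul, hU, Matrix.det_one]
      nlinarith [this, h2]
    obtain ⟨i, _, hi⟩ := Finset.prod_eq_zero_iff.mp this
    exact ⟨i, by linarith⟩
  obtain ⟨i₀, hi₀⟩ := hex
  refine le_antisymm ?_ (le_ciInf hge)
  calc ⨅ i, hA.eigenvalues i ≤ hA.eigenvalues i₀ :=
        ciInf_le (Set.Finite.bddBelow (Set.finite_range _)) i₀
    _ = -c := hi₀

abbrev Vkt (k t : ℕ) := (_ : Fin k) × Fin t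
abbrev Gkt (k t : ℕ) : SimpleGraph (Vkt k t) := completeMultipartiteGraph (fun _ : Fin k => Fin t)

lemma sigma_sum {M : Type*} [AddCommMonoid M] (k t : ℕ) (f : Vkt k t → M) :
    ∑ v : Vkt k t, f v = ∑ p : Fin k, ∑ a : Fin t, f ⟨p, a⟩ := by
  rw [← Finset.univ_sigma_univ, Finset.sum_sigma]

lemma quadform (k t : ℕ) [DecidableRel (Gkt k t).Adj] (x : Vkt k t → ℝ) :
    -(t:ℝ) * (x ⬝ᵥ x) ≤ x ⬝ᵥ (((Gkt k t).adjMatrix ℝ) *ᵥ x) := by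
  have key : x ⬝ᵥ (((Gkt k t).adjMatrix ℝ) *ᵥ x)
      = (∑ a, x a)^2 - ∑ p : Fin k, (∑ j : Fin t, x ⟨p,j⟩)^2 := by
    rw [dotProduct_mulVec_adjMatrix]
    have h1 : ∀ i j : Vkt k t, (if (Gkt k t).Adj i j then x i * x j else 0)
        = x i * x j - (if i.1 = j.1 then x i * x j else 0) := by
      intro i j
      by_cases h : i.1 = j.1 <;> simp [h]
    simp only [h1, Finset.sum_sub_distrib]
    congr 1
    · rw [sq, Finset.sum_mul_sum]
    · trans ∑ p : Fin k, ∑ a : Fin t, ∑ q : Fin k, ∑ b : Fin t,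
          (if p = q then x ⟨p,a⟩ * x ⟨q,b⟩ else (0:ℝ))
      · rw [sigma_sum k t (fun i => ∑ j : Vkt k t, if i.1 = j.1 then x i * x j else 0)]
        refine Finset.sum_congr rfl fun p _ => ?_
        refine Finset.sum_congr rfl fun a _ => ?_
        exact sigma_sum k t (fun j : Vkt k t => if p = j.1 then x ⟨p,a⟩ * x j else (0:ℝ))
      · refine Finset.sum_congr rfl fun p _ => ?_
        rw [sq, Finset.sum_mul_sum]
        rw [Finset.sum_comm]
        simp [Finset.sum_ite_eq']
  rw [key]
  have h2 : ∀ p : Fin k, (∑ j : Fin t, x ⟨p,j⟩)^2 ≤ (t:ℝ) * ∑ j : Fin t, x ⟨p,j⟩^2 := by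
    intro p
    have := sq_sum_le_card_mul_sum_sq (s := (univ : Finset (Fin t)))
      (f := fun j => x ⟨p,j⟩)
    simpa using this
  have h3 : x ⬝ᵥ x = ∑ p : Fin k, ∑ j : Fin t, x ⟨p,j⟩^2 := by
    rw [dotProduct, sigma_sum k t (fun v => x v * x v)]
    simp [sq]
  have h4 : (0:ℝ) ≤ (∑ a, x a)^2 := sq_nonneg _
  have h5 : ∑ p : Fin k, (∑ j : Fin t, x ⟨p,j⟩)^2 ≤ (t:ℝ) * (x ⬝ᵥ x) := by
    rw [h3, Finset.mul_sum]
    exact Finset.sum_le_sum fun p _ => h2 p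
  nlinarith

noncomputable def uu (k : ℕ) (hk : 2 ≤ k) : Fin k → ℝ := fun p =>
  (if p = ⟨0, by omega⟩ then 1 else 0) - (if p = ⟨1, by omega⟩ then 1 else 0)

noncomputable def xx (k t : ℕ) (hk : 2 ≤ k) : Vkt k t → ℝ := fun v => uu k hk v.1

lemma uu_sum (k : ℕ) (hk : 2 ≤ k) : ∑ p, uu k hk p = 0 := by
  unfold uu
  rw [Finset.sum_sub_distrib]
  simp

lemma xx_ne (k t : ℕ) (hk : 2 ≤ k) (ht : 1 ≤ t) : xx k t hk ≠ 0 := by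
  intro h
  have h0 := congrFun h ⟨⟨0, by omega⟩, ⟨0, by omega⟩⟩
  simp only [xx, uu, Pi.zero_apply] at h0
  have hne : (⟨0, by omega⟩ : Fin k) ≠ ⟨1, by omega⟩ := by
    intro hc; exact absurd (congrArg Fin.val hc) (by simp)
  simp [hne] at h0

lemma eigvec (k t : ℕ) (hk : 2 ≤ k) [DecidableRel (Gkt k t).Adj] :
    ((Gkt k t).adjMatrix ℝ) *ᵥ (xx k t hk) = (-(t:ℝ)) • (xx k t hk) := by
  funext v
  rw [Matrix.mulVec]
  rw [show ((Gkt k t).adjMatrix ℝ v) ⬝ᵥ (xx k t hk)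
      = ∑ w : Vkt k t, (if v.1 = w.1 then 0 else xx k t hk w) from by
    refine Finset.sum_congr rfl fun w _ => ?_
    by_cases h : v.1 = w.1 <;> simp [h]]
  rw [sigma_sum k t (fun w : Vkt k t => if v.1 = w.1 then (0:ℝ) else xx k t hk w)]
  have h1 : ∀ p : Fin k, ∑ a : Fin t, (if v.1 = p then (0:ℝ) else xx k t hk ⟨p, a⟩)
      = (t : ℝ) * uu k hk p - (if v.1 = p then (t:ℝ) * uu k hk p else 0) := by
    intro p
    by_cases h : v.1 = p <;> simp [h, xx, mul_comm]
  rw [Finset.sum_congr rfl fun p _ => h1 p, Finset.sum_sub_distrib]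
  rw [← Finset.mul_sum, uu_sum, Finset.sum_ite_eq]
  simp [xx]

lemma lambdaMin_eq (k t : ℕ) (hk : 2 ≤ k) (ht : 1 ≤ t) :
    lambdaMin (Gkt k t) = -(t : ℝ) := by
  haveI : Nonempty (Vkt k t) := ⟨⟨⟨0, by omega⟩, ⟨0, by omega⟩⟩⟩
  show (letI := Classical.decRel (Gkt k t).Adj
    ⨅ i, (adj_isHermitian (Gkt k t)).eigenvalues i) = -(t:ℝ)
  letI := Classical.decRel (Gkt k t).Adj
  exact infEig (adj_isHermitian (Gkt k t)) (t:ℝ) (quadform k t)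
    (xx k t hk) (xx_ne k t hk ht) (eigvec k t hk)

lemma edgeCount_eq (k t : ℕ) (hk : 2 ≤ k) :
    2 * edgeCount (Gkt k t) = k * t * ((k - 1) * t) := by
  classical
  have hdeg : ∀ v : Vkt k t, (Gkt k t).degree v = (k - 1) * t := by
    intro v
    rw [SimpleGraph.degree, SimpleGraph.neighborFinset_eq_filter]
    rw [Finset.card_filter]
    rw [sigma_sum k t (fun w : Vkt k t => if (Gkt k t).Adj v w then 1 else 0)]
    have : ∀ p : Fin k, ∑ a : Fin t, (if (Gkt k t).Adj v ⟨p, a⟩ then 1 else 0)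
        = if v.1 = p then 0 else t := by
      intro p
      by_cases h : v.1 = p <;> simp [SimpleGraph.comap_adj, h]
    rw [Finset.sum_congr rfl fun p _ => this p]
    rw [← Finset.sum_erase_add _ _ (Finset.mem_univ v.1)]
    rw [Finset.sum_congr rfl (fun p hp => by
      rw [if_neg (fun h => (Finset.ne_of_mem_erase hp) h.symm)])]
    simp [Finset.card_erase_of_mem]
  have hsum : ∑ v : Vkt k t, (Gkt k t).degree v = k * t * ((k - 1) * t) := by
    rw [Finset.sum_congr rfl fun v _ => hdeg v, Finset.sum_const]
    simp [Fintype.card_sigma, mul_assoc]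
  have h2 : ∑ v : Vkt k t, (Gkt k t).degree v = 2 * (Gkt k t).edgeFinset.card :=
    SimpleGraph.sum_degrees_eq_twice_card_edges _
  have h3 : edgeCount (Gkt k t) = (Gkt k t).edgeFinset.card := by
    rw [edgeCount, Nat.card_eq_fintype_card, SimpleGraph.edgeFinset_card]
  rw [h3, ← h2, hsum]


lemma chromNum_eq (k t : ℕ) (hk : 2 ≤ k) (ht : 1 ≤ t) :
    chromNum (Gkt k t) = k := by
  have hcol : (Gkt k t).Colorable k :=
    ⟨SimpleGraph.Coloring.mk (fun v => v.1) (fun {a b} h => h)⟩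
  have hle : (Gkt k t).chromaticNumber ≤ (k : ℕ∞) := hcol.chromaticNumber_le
  have hclique : (Gkt k t).IsClique
      (↑(univ.image (fun p : Fin k => (⟨p, ⟨0, by omega⟩⟩ : Vkt k t)))) := by
    intro u hu v hv huv
    simp only [Finset.coe_image, Set.mem_image, Finset.mem_coe] at hu hv
    obtain ⟨p, _, rfl⟩ := hu
    obtain ⟨q, _, rfl⟩ := hv
    intro h
    exact huv (by subst h; rfl)
  have hge := hclique.card_le_chromaticNumber
  rw [Finset.card_image_of_injective _ (fun a b h => by simpa using congrArg Sigma.fst h)] at hge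
  simp only [Finset.card_univ, Fintype.card_fin] at hge
  have : (Gkt k t).chromaticNumber = (k : ℕ∞) := le_antisymm hle hge
  rw [chromNum, this]
  rfl


lemma indepNum_eq (k t : ℕ) (hk : 2 ≤ k) (ht : 1 ≤ t) :
    _root_.indepNum (Gkt k t) = t := by
  set S := {m | ∃ s : Finset (Vkt k t), IsIndepFinset (Gkt k t) s ∧ s.card = m} with hS
  have hbd : ∀ m ∈ S, m ≤ t := by
    rintro m ⟨s, hs, rfl⟩
    have : s.card ≤ (univ : Finset (Fin t)).card := by
      apply Finset.card_le_card_of_injOn (fun v => v.2) (fun v _ => Finset.mem_univ _)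
      intro u hu v hv h2
      have h1 : u.1 = v.1 := by
        by_contra h
        exact hs u hu v hv h
      exact Sigma.ext h1 (heq_of_eq h2)
    simpa using this
  have hmem : t ∈ S := by
    refine ⟨univ.map ⟨fun j : Fin t => (⟨⟨0, by omega⟩, j⟩ : Vkt k t), fun a b h => by
      simpa using congrArg Sigma.snd h⟩, ?_, by simp⟩
    rintro u hu v hv hadj
    simp only [Finset.mem_map, Function.Embedding.coeFn_mk] at hu hv
    obtain ⟨a, _, rfl⟩ := hu
    obtain ⟨b, _, rfl⟩ := hv
    exact hadj rfl
  exact le_antisymm (csSup_le ⟨t, hmem⟩ hbd) (le_csSup ⟨t, hbd⟩ hmem)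


lemma theta_eq (k t : ℕ) (hk : 2 ≤ k) (ht : 1 ≤ t) :
    theta (Gkt k t) = (t : ℝ) := by
  rw [theta, indepNum_eq k t hk ht]
  have hcard : (Fintype.card (Vkt k t) : ℝ) = (k : ℝ) * t := by
    simp [Fintype.card_sigma]
  rw [hcard]
  apply min_eq_right
  have h2 : (2:ℝ) ≤ (k:ℝ) := by exact_mod_cast hk
  have h0 : (0:ℝ) ≤ (t:ℝ) := by positivity
  nlinarith


end Aux

/-- Subsection 3.3. Let `G` be the complete `k`-partite graph with
`k ≥ 2` parts of size `t ≥ 1` each. Then `λ(G) = -t`, and the bound of Theorem 2.7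
holds with equality: `λ(G) = -|E(G)| / (C(χ(G), 2) · θ(G))`. -/
theorem completeMultipartite_bound_sharp (k t : ℕ) (hk : 2 ≤ k) (ht : 1 ≤ t) :
    lambdaMin (completeMultipartiteGraph (fun _ : Fin k => Fin t)) = -(t : ℝ) ∧
      lambdaMin (completeMultipartiteGraph (fun _ : Fin k => Fin t)) =
        -(edgeCount (completeMultipartiteGraph (fun _ : Fin k => Fin t)) : ℝ) /
          (((chromNum (completeMultipartiteGraph (fun _ : Fin k => Fin t))).choose 2 : ℝ) *
            theta (completeMultipartiteGraph (fun _ : Fin k => Fin t))) := by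
  haveI : Nonempty (Vkt k t) := ⟨⟨⟨0, by omega⟩, ⟨0, by omega⟩⟩⟩
  have hL : lambdaMin (Gkt k t) = -(t : ℝ) := lambdaMin_eq k t hk ht
  refine ⟨hL, ?_⟩
  rw [hL, chromNum_eq k t hk ht, theta_eq k t hk ht]
  have hE : 2 * (edgeCount (Gkt k t) : ℝ) = (k : ℝ) * t * (((k:ℝ) - 1) * t) := by
    have := edgeCount_eq k t hk
    have := congrArg (fun m : ℕ => (m : ℝ)) this
    push_cast at this
    rw [Nat.cast_sub (by omega)] at this
    push_cast at this
    linarith [this]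
  have hch : ((k.choose 2 : ℕ) : ℝ) = (k:ℝ) * ((k:ℝ) - 1) / 2 := by
    rw [Nat.cast_choose_two]
  rw [hch]
  have hk1 : (1:ℝ) ≤ (k:ℝ) - 1 := by
    have : (2:ℝ) ≤ (k:ℝ) := by exact_mod_cast hk
    linarith
  have htpos : (0:ℝ) < t := by exact_mod_cast ht
  have hkpos : (0:ℝ) < k := by positivity
  rw [eq_div_iff (by positivity)]
  nlinarith [hE]
end

section
/- For a positive integer s, let H_s = 2K_s * 2K_s be the join of two copies of the disjoint union of two complete graphs K_s. Then every induced bipartite subgraph of H_s has at most four vertices, and η(H_s) = 2. -/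
/-!
Common definitions: smallest adjacency eigenvalue, independent vertex sets,
edge counts of induced subgraphs, chromatic number, independence number,
and the invariants `η`, `ι`, `θ` from the paper.
-/

open Finset SimpleGraph Matrix

set_option linter.unusedSectionVars false

variable {V : Type} [Fintype V] [DecidableEq V]

/-- The join `G₁ * G₂` of two graphs: their disjoint union together with all the
edges between the two vertex sets. -/
def graphJoin {α β : Type} (G₁ : SimpleGraph α) (G₂ : SimpleGraph β) :
    SimpleGraph (α ⊕ β) where
  Adj u v :=
    match u, v with
    | Sum.inl a, Sum.inl a' => G₁.Adj a a'
    | Sum.inr b, Sum.inr b' => G₂.Adj b b'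
    | Sum.inl _, Sum.inr _ => True
    | Sum.inr _, Sum.inl _ => True
  symm := ⟨by rintro (a | b) (a' | b') h <;> first | exact h.symm | trivial⟩
  loopless := ⟨by rintro (a | b) h <;> first | exact G₁.irrefl h | exact G₂.irrefl h⟩

/-- `2Kₛ`: the disjoint union of two copies of the complete graph `Kₛ`
(the copies are indexed by `Fin 2`). -/
def twoComplete (s : ℕ) : SimpleGraph (Fin 2 × Fin s) where
  Adj u v := u.1 = v.1 ∧ u.2 ≠ v.2
  symm := ⟨fun _ _ h => ⟨h.1.symm, h.2.symm⟩⟩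
  loopless := ⟨fun _ h => h.2 rfl⟩

/-- `Hₛ = 2Kₛ * 2Kₛ`: the join of two copies of `2Kₛ` (Example 3.4). -/
def paperGraphH (s : ℕ) : SimpleGraph ((Fin 2 × Fin s) ⊕ (Fin 2 × Fin s)) :=
  graphJoin (twoComplete s) (twoComplete s)

lemma indep_card_le_two {s : ℕ} (A : Finset ((Fin 2 × Fin s) ⊕ (Fin 2 × Fin s)))
    (hA : IsIndepFinset (paperGraphH s) A) : A.card ≤ 2 := by
  have h : A.card ≤ (Finset.univ : Finset (Fin 2)).card := by
    apply Finset.card_le_card_of_injOn (Sum.elim Prod.fst Prod.fst)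
      (fun _ _ => Finset.mem_univ _)
    intro u hu v hv huv
    by_contra hne
    have hadj := hA u hu v hv
    rcases u with ⟨i, j⟩ | ⟨i, j⟩ <;> rcases v with ⟨i', j'⟩ | ⟨i', j'⟩ <;>
      simp only [Sum.elim_inl, Sum.elim_inr] at huv <;>
      simp only [paperGraphH, graphJoin, twoComplete, not_and, not_not,
        not_true] at hadj
    all_goals (obtain rfl := huv; obtain rfl := hadj rfl; exact hne rfl)
  simpa using h

lemma inducedEdgeCount_le_mul (G : SimpleGraph V) (V₁ V₂ : Finset V)
    (h1 : IsIndepFinset G V₁) (h2 : IsIndepFinset G V₂) :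
    inducedEdgeCount G (V₁ ∪ V₂) ≤ V₁.card * V₂.card := by
  classical
  set S : Finset (Sym2 V) := (V₁ ×ˢ V₂).image (fun p => s(p.1, p.2)) with hS
  have key : ∀ e ∈ (G.induce ((V₁ ∪ V₂ : Finset V) : Set V)).edgeSet,
      Sym2.map Subtype.val e ∈ S := by
    intro e
    induction e using Sym2.ind with
    | _ x y =>
      intro he
      rw [SimpleGraph.mem_edgeSet] at he
      have hadj : G.Adj x.1 y.1 := he
      have hx := x.2; have hy := y.2
      simp only [Finset.coe_union, Set.mem_union, Finset.mem_coe] at hx hy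
      rcases hx with hx | hx <;> rcases hy with hy | hy
      · exact absurd hadj (h1 _ hx _ hy)
      · exact Finset.mem_image.2 ⟨(x.1, y.1), Finset.mem_product.2 ⟨hx, hy⟩, by
          simp [Sym2.map_pair_eq]⟩
      · exact Finset.mem_image.2 ⟨(y.1, x.1), Finset.mem_product.2 ⟨hy, hx⟩, by
          simp [Sym2.map_pair_eq, Sym2.eq_swap]⟩
      · exact absurd hadj (h2 _ hx _ hy)
  have hinj : Function.Injective
      (fun e : (G.induce ((V₁ ∪ V₂ : Finset V) : Set V)).edgeSet =>
        (⟨Sym2.map Subtype.val e.1, key e.1 e.2⟩ : {e // e ∈ S})) := by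
    intro e e' h
    have := congrArg Subtype.val h
    exact Subtype.ext (Sym2.map.injective Subtype.val_injective this)
  calc inducedEdgeCount G (V₁ ∪ V₂)
      ≤ Nat.card {e // e ∈ S} := Nat.card_le_card_of_injective _ hinj
    _ = S.card := Nat.card_eq_finsetCard S
    _ ≤ (V₁ ×ˢ V₂).card := Finset.card_image_le
    _ = V₁.card * V₂.card := Finset.card_product _ _

/-- Example 3.4. Every induced bipartite subgraph of `Hₛ` has at
most four vertices, and `η(Hₛ) = 2`. -/
theorem paperGraphH_bipartite_small_and_eta (s : ℕ) (hs : 1 ≤ s) :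
    (∀ V₁ V₂ : Finset ((Fin 2 × Fin s) ⊕ (Fin 2 × Fin s)), Disjoint V₁ V₂ →
        IsIndepFinset (paperGraphH s) V₁ → IsIndepFinset (paperGraphH s) V₂ →
        (V₁ ∪ V₂).card ≤ 4) ∧
      eta (paperGraphH s) = 2 := by
  constructor
  · intro V₁ V₂ _ h1 h2
    calc (V₁ ∪ V₂).card ≤ V₁.card + V₂.card := Finset.card_union_le _ _
      _ ≤ 2 + 2 := Nat.add_le_add (indep_card_le_two V₁ h1) (indep_card_le_two V₂ h2)
  · -- eta = 2
    set z : Fin s := ⟨0, hs⟩ with hz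
    set a : (Fin 2 × Fin s) ⊕ (Fin 2 × Fin s) := Sum.inl (0, z) with hadef
    set b : (Fin 2 × Fin s) ⊕ (Fin 2 × Fin s) := Sum.inl (1, z) with hbdef
    set c : (Fin 2 × Fin s) ⊕ (Fin 2 × Fin s) := Sum.inr (0, z) with hcdef
    set d : (Fin 2 × Fin s) ⊕ (Fin 2 × Fin s) := Sum.inr (1, z) with hddef
    set W₁ : Finset ((Fin 2 × Fin s) ⊕ (Fin 2 × Fin s)) := {a, b} with hW1
    set W₂ : Finset ((Fin 2 × Fin s) ⊕ (Fin 2 × Fin s)) := {c, d} with hW2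
    have hab : a ≠ b := by simp [hadef, hbdef]
    have hcd : c ≠ d := by simp [hcdef, hddef]
    have hW1card : W₁.card = 2 := by
      rw [hW1, Finset.card_insert_of_notMem (by simp [hab]), Finset.card_singleton]
    have hW2card : W₂.card = 2 := by
      rw [hW2, Finset.card_insert_of_notMem (by simp [hcd]), Finset.card_singleton]
    have hW1ind : IsIndepFinset (paperGraphH s) W₁ := by
      intro u hu v hv
      rw [hW1] at hu hv
      simp only [Finset.mem_insert, Finset.mem_singleton] at hu hv
      rcases hu with rfl | rfl <;> rcases hv with rfl | rfl <;>
        simp [hadef, hbdef, paperGraphH, graphJoin, twoComplete]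
    have hW2ind : IsIndepFinset (paperGraphH s) W₂ := by
      intro u hu v hv
      rw [hW2] at hu hv
      simp only [Finset.mem_insert, Finset.mem_singleton] at hu hv
      rcases hu with rfl | rfl <;> rcases hv with rfl | rfl <;>
        simp [hcdef, hddef, paperGraphH, graphJoin, twoComplete]
    have hWdisj : Disjoint W₁ W₂ := by
      rw [Finset.disjoint_left]
      intro x hx hx'
      rw [hW1] at hx; rw [hW2] at hx'
      simp only [Finset.mem_insert, Finset.mem_singleton] at hx hx'
      rcases hx with rfl | rfl <;> rcases hx' with h | h <;>
        simp [hadef, hbdef, hcdef, hddef] at h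
    -- membership of the four vertices in W₁ ∪ W₂
    have hma : a ∈ ((W₁ ∪ W₂ : Finset _) : Set _) := by simp [hW1, hW2]
    have hmb : b ∈ ((W₁ ∪ W₂ : Finset _) : Set _) := by simp [hW1, hW2]
    have hmc : c ∈ ((W₁ ∪ W₂ : Finset _) : Set _) := by simp [hW1, hW2]
    have hmd : d ∈ ((W₁ ∪ W₂ : Finset _) : Set _) := by simp [hW1, hW2]
    set GI := (paperGraphH s).induce ((W₁ ∪ W₂ : Finset _) : Set _) with hGI
    have hEge : 4 ≤ inducedEdgeCount (paperGraphH s) (W₁ ∪ W₂) := by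
      have hAdjAC : GI.Adj ⟨a, hma⟩ ⟨c, hmc⟩ := by
        exact trivial
      have hAdjAD : GI.Adj ⟨a, hma⟩ ⟨d, hmd⟩ := by
        exact trivial
      have hAdjBC : GI.Adj ⟨b, hmb⟩ ⟨c, hmc⟩ := by
        exact trivial
      have hAdjBD : GI.Adj ⟨b, hmb⟩ ⟨d, hmd⟩ := by
        exact trivial
      let f : Fin 4 → GI.edgeSet := fun i =>
        match i with
        | 0 => ⟨s(⟨a, hma⟩, ⟨c, hmc⟩), hAdjAC⟩
        | 1 => ⟨s(⟨a, hma⟩, ⟨d, hmd⟩), hAdjAD⟩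
        | 2 => ⟨s(⟨b, hmb⟩, ⟨c, hmc⟩), hAdjBC⟩
        | 3 => ⟨s(⟨b, hmb⟩, ⟨d, hmd⟩), hAdjBD⟩
      have hfinj : Function.Injective f := by
        intro i j hij
        have := congrArg Subtype.val hij
        fin_cases i <;> fin_cases j <;> first
          | rfl
          | (exfalso; simp only [f, Sym2.eq_iff, Subtype.mk.injEq] at this;
             simp [hadef, hbdef, hcdef, hddef] at this)
      have := Nat.card_le_card_of_injective f hfinj
      simpa [inducedEdgeCount] using this
    have hEle : inducedEdgeCount (paperGraphH s) (W₁ ∪ W₂) ≤ 4 := by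
      have := inducedEdgeCount_le_mul (paperGraphH s) W₁ W₂ hW1ind hW2ind
      rwa [hW1card, hW2card] at this
    have hEeq : inducedEdgeCount (paperGraphH s) (W₁ ∪ W₂) = 4 := le_antisymm hEle hEge
    -- the value of the witness
    have hsqrt4 : Real.sqrt ((W₁.card : ℝ) * (W₂.card : ℝ)) = 2 := by
      rw [hW1card, hW2card]
      rw [show ((2:ℕ):ℝ) * ((2:ℕ):ℝ) = (2:ℝ)^2 by norm_num]
      exact Real.sqrt_sq (by norm_num)
    have hwit : (2 : ℝ) ∈ {x : ℝ | ∃ V₁ V₂ : Finset ((Fin 2 × Fin s) ⊕ (Fin 2 × Fin s)),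
        V₁.Nonempty ∧ V₂.Nonempty ∧ Disjoint V₁ V₂ ∧
        IsIndepFinset (paperGraphH s) V₁ ∧ IsIndepFinset (paperGraphH s) V₂ ∧
        x = (inducedEdgeCount (paperGraphH s) (V₁ ∪ V₂) : ℝ) /
          Real.sqrt ((V₁.card : ℝ) * (V₂.card : ℝ))} := by
      refine ⟨W₁, W₂, ⟨a, by simp [hW1]⟩, ⟨c, by simp [hW2]⟩, hWdisj, hW1ind, hW2ind, ?_⟩
      rw [hEeq, hsqrt4]
      norm_num
    have hub : ∀ x ∈ {x : ℝ | ∃ V₁ V₂ : Finset ((Fin 2 × Fin s) ⊕ (Fin 2 × Fin s)),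
        V₁.Nonempty ∧ V₂.Nonempty ∧ Disjoint V₁ V₂ ∧
        IsIndepFinset (paperGraphH s) V₁ ∧ IsIndepFinset (paperGraphH s) V₂ ∧
        x = (inducedEdgeCount (paperGraphH s) (V₁ ∪ V₂) : ℝ) /
          Real.sqrt ((V₁.card : ℝ) * (V₂.card : ℝ))}, x ≤ 2 := by
      rintro x ⟨V₁, V₂, h1ne, h2ne, hd, hi1, hi2, rfl⟩
      have hp1 : 1 ≤ V₁.card := Finset.card_pos.2 h1ne
      have hq1 : 1 ≤ V₂.card := Finset.card_pos.2 h2ne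
      have hp2 : V₁.card ≤ 2 := indep_card_le_two V₁ hi1
      have hq2 : V₂.card ≤ 2 := indep_card_le_two V₂ hi2
      have hE : inducedEdgeCount (paperGraphH s) (V₁ ∪ V₂) ≤ V₁.card * V₂.card :=
        inducedEdgeCount_le_mul _ _ _ hi1 hi2
      set p : ℝ := (V₁.card : ℝ) with hp
      set q : ℝ := (V₂.card : ℝ) with hq
      have hp0 : (1:ℝ) ≤ p := by rw [hp]; exact_mod_cast hp1
      have hq0 : (1:ℝ) ≤ q := by rw [hq]; exact_mod_cast hq1
      have hpq0 : (0:ℝ) < p * q := by nlinarith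
      have hs0 : 0 < Real.sqrt (p * q) := Real.sqrt_pos.2 hpq0
      rw [div_le_iff₀ hs0]
      have hsle : Real.sqrt (p * q) ≤ 2 := by
        rw [show (2:ℝ) = Real.sqrt 4 by
          rw [show (4:ℝ) = 2^2 by norm_num, Real.sqrt_sq]; norm_num]
        apply Real.sqrt_le_sqrt
        have hp2' : p ≤ 2 := by rw [hp]; exact_mod_cast hp2
        have hq2' : q ≤ 2 := by rw [hq]; exact_mod_cast hq2
        nlinarith
      calc (inducedEdgeCount (paperGraphH s) (V₁ ∪ V₂) : ℝ) ≤ p * q := by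
            rw [hp, hq]; exact_mod_cast hE
        _ = Real.sqrt (p * q) * Real.sqrt (p * q) := (Real.mul_self_sqrt hpq0.le).symm
        _ ≤ 2 * Real.sqrt (p * q) :=
            mul_le_mul_of_nonneg_right hsle hs0.le
    exact le_antisymm (csSup_le ⟨2, hwit⟩ hub) (le_csSup ⟨2, hub⟩ hwit)
end

section
/- Let G be a finite simple graph on n vertices with m ≥ 1 edges such that χ(G) = 2 or χ(G) = 3, and set r = χ(G). Then -m / (C(χ(G), 2) · θ(G)) ≤ -2^{r+1} m^r / (r · n^{2r-1}). -/
/-!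
Common definitions: smallest adjacency eigenvalue, independent vertex sets,
edge counts of induced subgraphs, chromatic number, independence number,
and the invariants `η`, `ι`, `θ` from the paper.
-/

open Finset SimpleGraph Matrix

set_option linter.unusedSectionVars false

variable {V : Type} [Fintype V] [DecidableEq V]

lemma edgeCount_eq_card_edgeFinset (G : SimpleGraph V) [DecidableRel G.Adj] :
    edgeCount G = G.edgeFinset.card := by
  rw [edgeCount, Nat.card_coe_set_eq, Set.ncard_eq_toFinset_card']
  congr 1

/-- Turán-type bound from a `k`-coloring: `2km + n² ≤ kn²`. -/
lemma colorable_edge_bound (G : SimpleGraph V) {k : ℕ} (hk : G.Colorable k) :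
    k * (2 * edgeCount G) + (Fintype.card V) ^ 2 ≤ k * (Fintype.card V) ^ 2 := by
  classical
  obtain ⟨C⟩ := hk
  set n := Fintype.card V with hn
  set a : Fin k → ℕ := fun i => (univ.filter fun v => C v = i).card with ha
  have hdeg : ∀ v : V, G.degree v + a (C v) ≤ n := by
    intro v
    have hdisj : Disjoint (G.neighborFinset v) (univ.filter fun w => C w = C v) := by
      rw [Finset.disjoint_left]
      intro w hw hw2
      rw [mem_neighborFinset] at hw
      rw [mem_filter] at hw2
      exact C.valid hw.symm hw2.2
    calc G.degree v + a (C v)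
        = (G.neighborFinset v ∪ univ.filter fun w => C w = C v).card := by
          rw [Finset.card_union_of_disjoint hdisj]
          rfl
      _ ≤ (univ : Finset V).card := Finset.card_le_card (Finset.subset_univ _)
      _ = n := rfl
  have hsum : ∑ v : V, (G.degree v + a (C v)) ≤ n * n := by
    calc ∑ v : V, (G.degree v + a (C v)) ≤ ∑ _v : V, n :=
          Finset.sum_le_sum fun v _ => hdeg v
      _ = n * n := by simp [hn, mul_comm]
  have h1 : ∑ v : V, G.degree v = 2 * edgeCount G := by
    rw [edgeCount_eq_card_edgeFinset]
    exact G.sum_degrees_eq_twice_card_edges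
  have h2 : ∑ v : V, a (C v) = ∑ i : Fin k, a i ^ 2 := by
    rw [← Finset.sum_fiberwise univ C (fun v => a (C v))]
    refine Finset.sum_congr rfl fun i _ => ?_
    rw [Finset.sum_congr rfl (fun v hv => by rw [(Finset.mem_filter.mp hv).2])]
    rw [Finset.sum_const, smul_eq_mul, sq]
  have h3 : ∑ i : Fin k, a i = n := by
    rw [← Finset.card_eq_sum_card_fiberwise (f := C) (fun v _ => Finset.mem_univ _)]
    rfl
  have h4 : n ^ 2 ≤ k * ∑ i : Fin k, a i ^ 2 := by
    have := sq_sum_le_card_mul_sum_sq (s := (univ : Finset (Fin k))) (f := a)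
    simpa [h3] using this
  have key : 2 * edgeCount G + ∑ i : Fin k, a i ^ 2 ≤ n ^ 2 := by
    rw [← h1, ← h2, ← Finset.sum_add_distrib]
    calc _ ≤ n * n := hsum
      _ = n ^ 2 := (sq n).symm
  calc k * (2 * edgeCount G) + n ^ 2
      ≤ k * (2 * edgeCount G) + k * ∑ i : Fin k, a i ^ 2 := by
        exact Nat.add_le_add_left h4 _
    _ = k * (2 * edgeCount G + ∑ i : Fin k, a i ^ 2) := by ring
    _ ≤ k * n ^ 2 := Nat.mul_le_mul_left _ key

lemma theta_pos (G : SimpleGraph V) (hm : 1 ≤ edgeCount G) :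
    1 ≤ theta G ∧ (2 : ℝ) ≤ Fintype.card V := by
  classical
  have hne : G.edgeSet.Nonempty := by
    by_contra h
    rw [Set.not_nonempty_iff_eq_empty] at h
    rw [edgeCount, h] at hm
    simp at hm
  obtain ⟨e, he⟩ := hne
  induction e with
  | h u v =>
    have huv : G.Adj u v := he
    have hcard : 2 ≤ Fintype.card V :=
      Fintype.one_lt_card_iff_nontrivial.mpr ⟨u, v, huv.ne⟩
    have hα : 1 ≤ _root_.indepNum G := by
      have hb : BddAbove {k | ∃ s : Finset V, IsIndepFinset G s ∧ s.card = k} := by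
        refine ⟨Fintype.card V, fun k hk => ?_⟩
        obtain ⟨s, _, rfl⟩ := hk
        exact Finset.card_le_univ s
      refine le_csSup hb ⟨{u}, ?_, by simp⟩
      intro x hx y hy
      simp only [Finset.mem_singleton] at hx hy
      subst hx; subst hy
      exact fun h => G.loopless.irrefl _ h
    constructor
    · rw [theta, le_min_iff]
      constructor
      · have : (2 : ℝ) ≤ (Fintype.card V : ℝ) := by exact_mod_cast hcard
        linarith
      · exact_mod_cast hα
    · exact_mod_cast hcard

/-- Theorem 4.2(a). Let `G` have `n` vertices, `m ≥ 1` edges and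
`χ(G) = 2` or `3`; set `r = χ(G)`. Then
`-m / (C(χ(G),2) · θ(G)) ≤ -2^(r+1) m^r / (r · n^(2r-1))`. -/
theorem bound_le_nikiforov_of_chromatic (G : SimpleGraph V)
    (hm : 1 ≤ edgeCount G) (hchi : chromNum G = 2 ∨ chromNum G = 3) :
    -(edgeCount G : ℝ) / (((chromNum G).choose 2 : ℝ) * theta G) ≤
      -((2 : ℝ) ^ (chromNum G + 1) * (edgeCount G : ℝ) ^ chromNum G) /
        ((chromNum G : ℝ) * (Fintype.card V : ℝ) ^ (2 * chromNum G - 1)) := by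
  classical
  obtain ⟨hθ1, hn2⟩ := theta_pos G hm
  have hθn : theta G ≤ (Fintype.card V : ℝ) / 2 := min_le_left _ _
  have hθ0 : (0 : ℝ) < theta G := lt_of_lt_of_le one_pos hθ1
  have hn0 : (0 : ℝ) < (Fintype.card V : ℝ) := by linarith
  have hcol : G.Colorable (chromNum G) := G.colorable_chromaticNumber_of_fintype
  have hm1 : (1 : ℝ) ≤ (edgeCount G : ℝ) := by exact_mod_cast hm
  set m : ℝ := (edgeCount G : ℝ) with hmdef
  set n : ℝ := (Fintype.card V : ℝ) with hndef
  rcases hchi with h | h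
  · rw [h] at hcol ⊢
    have hb := colorable_edge_bound G hcol
    have hb' : 4 * m ≤ n ^ 2 := by
      have : (2 * (2 * edgeCount G) + Fintype.card V ^ 2 : ℝ) ≤ 2 * Fintype.card V ^ 2 := by
        exact_mod_cast hb
      push_cast at this
      nlinarith [this]
    have e1 : Nat.choose 2 2 = 1 := rfl
    rw [e1, neg_div, neg_div, neg_le_neg_iff]
    rw [div_le_div_iff₀ (by positivity) (by positivity)]
    ring_nf
    nlinarith [mul_le_mul_of_nonneg_left hθn (by positivity : (0:ℝ) ≤ 8 * m ^ 2),
      mul_le_mul_of_nonneg_right hb' (by positivity : (0:ℝ) ≤ m * n)]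
  · rw [h] at hcol ⊢
    have hb := colorable_edge_bound G hcol
    have hb' : 3 * m ≤ n ^ 2 := by
      have : (3 * (2 * edgeCount G) + Fintype.card V ^ 2 : ℝ) ≤ 3 * Fintype.card V ^ 2 := by
        exact_mod_cast hb
      push_cast at this
      nlinarith [this]
    have e1 : Nat.choose 3 2 = 3 := rfl
    rw [e1, neg_div, neg_div, neg_le_neg_iff]
    rw [div_le_div_iff₀ (by positivity) (by positivity)]
    ring_nf
    have h9 : (3*m) * (3*m) ≤ n^2 * n^2 := mul_self_le_mul_self (by positivity) hb'
    have hA : 48 * m ^ 3 * theta G ≤ 24 * m ^ 3 * n := by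
      nlinarith [mul_le_mul_of_nonneg_left hθn (by positivity : (0:ℝ) ≤ 48 * m ^ 3)]
    have hB : 9 * (m ^ 3 * n) ≤ m * n ^ 5 := by
      nlinarith [mul_le_mul_of_nonneg_right h9 (by positivity : (0:ℝ) ≤ m * n)]
    have hC : (0:ℝ) ≤ m * n ^ 5 := by positivity
    nlinarith [hA, hB, hC]
end
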